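/- arXiv:2505.20134 — 4 statements merged into one kernel-verified Lean document; each statement's English description precedes it below -/
import Mathlib

section
/- Let F be a field, S an (associative, unital, not necessarily commutative) F-algebra, and D an S-module of finite length which is multiplicity free and such that every composition factor τ of D satisfies End_S(τ) = F. Let W be a finite-dimensional F-vector space, and regard W ⊗_F D as an S-module via the action on the second factor. If M₁ and M₂ are S-submodules of W ⊗_F D such that M₁ ∩ (L ⊗_F D) = M₂ ∩ (L ⊗_F D) inside W ⊗_F D for every one-dimensional F-subspace L ⊆ W, then M₁ = M₂. -/
open scoped TensorProduct

/-- Mathlib's former `JordanHolderModule.Iso` (removed since), restored with its old meaning. -/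
def JordanHolderModule.Iso {R M : Type*} [Ring R] [AddCommGroup M] [Module R M]
    (X Y : Submodule R M × Submodule R M) : Prop :=
  Nonempty <| (X.2 ⧸ X.1.comap X.2.subtype) ≃ₗ[R] Y.2 ⧸ Y.1.comap Y.2.subtype

/-- An `S`-module `D` is *multiplicity free* if it admits a composition series (from `⊥` to `⊤`)
whose factors are pairwise non-isomorphic. -/
def MultiplicityFree (S D : Type*) [Ring S] [AddCommGroup D] [Module S D] : Prop :=
  ∃ s : CompositionSeries (Submodule S D), s.head = ⊥ ∧ s.last = ⊤ ∧
    ∀ i j : Fin s.length, i ≠ j →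
      ¬ JordanHolderModule.Iso (s i.castSucc, s i.succ) (s j.castSucc, s j.succ)

/-- The image of `D' ⊗_F W'` inside `D ⊗[F] W`, as an `S`-submodule (where `S` acts through
the factor `D`). -/

def tensorSub (F : Type*) [Field F] {S : Type*} [Ring S] [Algebra F S]
    {D : Type*} [AddCommGroup D] [Module F D] [Module S D] [IsScalarTower F S D]
    {W : Type*} [AddCommGroup W] [Module F W]
    (D' : Submodule S D) (W' : Submodule F W) : Submodule S (D ⊗[F] W) :=
  Submodule.span S {x : D ⊗[F] W | ∃ d ∈ D', ∃ w ∈ W', d ⊗ₜ[F] w = x}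

section
variable {F : Type*} [Field F] {S : Type*} [Ring S] [Algebra F S]
variable {D : Type*} [AddCommGroup D] [Module F D] [Module S D] [IsScalarTower F S D]
variable {W : Type*} [AddCommGroup W] [Module F W]

noncomputable def coordMap (φ : W →ₗ[F] F) : D ⊗[F] W →ₗ[S] D :=
  (TensorProduct.AlgebraTensorModule.rid F S D).toLinearMap ∘ₗ
    TensorProduct.AlgebraTensorModule.map LinearMap.id φ

@[simp] lemma coordMap_tmul (φ : W →ₗ[F] F) (d : D) (w : W) :
    coordMap (S := S) φ (d ⊗ₜ[F] w) = φ w • d := by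
  simp [coordMap, TensorProduct.AlgebraTensorModule.rid_tmul]

noncomputable def mapRight (q : W →ₗ[F] W) : D ⊗[F] W →ₗ[S] D ⊗[F] W :=
  TensorProduct.AlgebraTensorModule.map LinearMap.id q

@[simp] lemma mapRight_tmul (q : W →ₗ[F] W) (d : D) (w : W) :
    mapRight (S := S) q (d ⊗ₜ[F] w) = d ⊗ₜ[F] (q w) := rfl

variable {A : Submodule S D} {V X Y : Submodule F W}

lemma tmul_mem_tensorSub {a : D} {v : W} (ha : a ∈ A) (hv : v ∈ V) :
    a ⊗ₜ[F] v ∈ tensorSub F A V :=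
  Submodule.subset_span ⟨a, ha, v, hv, rfl⟩

lemma tensorSub_mono (hXY : X ≤ Y) : tensorSub F A X ≤ tensorSub F A Y :=
  Submodule.span_mono (by rintro x ⟨d, hd, w, hw, rfl⟩; exact ⟨d, hd, w, hXY hw, rfl⟩)

lemma tensorSub_bot_right : tensorSub F A (⊥ : Submodule F W) = ⊥ := by
  rw [eq_bot_iff]
  refine Submodule.span_le.2 ?_
  rintro x ⟨d, hd, w, hw, rfl⟩
  simp only [Submodule.mem_bot] at hw ⊢
  rw [hw, TensorProduct.tmul_zero]
  exact Submodule.zero_mem _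

lemma coordMap_mem_of_tensorSub (φ : W →ₗ[F] F) {x : D ⊗[F] W}
    (hx : x ∈ tensorSub F A V) : coordMap (S := S) φ x ∈ A := by
  have : tensorSub F A V ≤ Submodule.comap (coordMap (S := S) φ) A := by
    refine Submodule.span_le.2 ?_
    rintro y ⟨d, hd, w, hw, rfl⟩
    simp only [SetLike.mem_coe, Submodule.mem_comap, coordMap_tmul]
    have : φ w • d = algebraMap F S (φ w) • d := (algebraMap_smul S (φ w) d).symm
    rw [this]
    exact A.smul_mem _ hd
  exact this hx

lemma coordMap_eq_zero_of_tensorSub (φ : W →ₗ[F] F) (hφ : ∀ v ∈ V, φ v = 0)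
    {x : D ⊗[F] W} (hx : x ∈ tensorSub F A V) : coordMap (S := S) φ x = 0 := by
  have : tensorSub F A V ≤ LinearMap.ker (coordMap (S := S) φ) := by
    refine Submodule.span_le.2 ?_
    rintro y ⟨d, hd, w, hw, rfl⟩
    simp only [SetLike.mem_coe, LinearMap.mem_ker, coordMap_tmul, hφ w hw, zero_smul]
  exact this hx

lemma tensorSub_expand {ι : Type*} [Fintype ι] (b : Module.Basis ι F W) (x : D ⊗[F] W) :
    x = ∑ i, coordMap (S := S) (b.coord i) x ⊗ₜ[F] b i := by
  have : (LinearMap.id : D ⊗[F] W →ₗ[F] D ⊗[F] W) =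
      ∑ i, (TensorProduct.mk F D W).flip (b i) ∘ₗ
        (coordMap (S := S) (b.coord i)).restrictScalars F := by
    apply TensorProduct.ext'
    intro d w
    simp only [LinearMap.id_coe, id_eq, LinearMap.coe_sum, Finset.sum_apply,
      LinearMap.coe_comp, Function.comp_apply, LinearMap.coe_restrictScalars,
      coordMap_tmul, TensorProduct.mk_apply, LinearMap.flip_apply]
    have hw : w = ∑ i, b.coord i w • b i := by
      simp only [Module.Basis.coord_apply]
      exact (b.sum_repr w).symm
    conv_lhs => rw [hw]
    rw [TensorProduct.tmul_sum]
    exact Finset.sum_congr rfl fun i _ => by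
      simp only [TensorProduct.tmul_smul, TensorProduct.smul_tmul']
  calc x = LinearMap.id (R := F) x := rfl
  _ = _ := by rw [this]; simp

lemma tensorSub_repr {ι : Type*} [Fintype ι] (b : Module.Basis ι F ↥V) {x : D ⊗[F] W}
    (hx : x ∈ tensorSub F A V) :
    ∃ a : ι → D, (∀ i, a i ∈ A) ∧ x = ∑ i, a i ⊗ₜ[F] (b i : W) := by
  let Z : Submodule S (D ⊗[F] W) :=
    { carrier := {x | ∃ a : ι → D, (∀ i, a i ∈ A) ∧ x = ∑ i, a i ⊗ₜ[F] (b i : W)}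
      add_mem' := by
        rintro x y ⟨a, ha, rfl⟩ ⟨c, hc, rfl⟩
        exact ⟨a + c, fun i => A.add_mem (ha i) (hc i), by
          rw [← Finset.sum_add_distrib]
          exact Finset.sum_congr rfl fun i _ => (TensorProduct.add_tmul _ _ _).symm⟩
      zero_mem' := ⟨0, fun i => A.zero_mem, by simp⟩
      smul_mem' := by
        rintro s x ⟨a, ha, rfl⟩
        exact ⟨s • a, fun i => A.smul_mem s (ha i), by
          rw [Finset.smul_sum]
          exact Finset.sum_congr rfl fun i _ => by
            simp [TensorProduct.smul_tmul']⟩ }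
  have : tensorSub F A V ≤ Z := by
    refine Submodule.span_le.2 ?_
    rintro y ⟨d, hd, w, hw, rfl⟩
    refine ⟨fun i => algebraMap F S (b.repr ⟨w, hw⟩ i) • d, fun i => A.smul_mem _ hd, ?_⟩
    have hw' : w = ∑ i, b.repr ⟨w, hw⟩ i • (b i : W) := by
      have := Module.Basis.sum_repr b ⟨w, hw⟩
      apply_fun (Submodule.subtype V) at this
      simp only [map_sum, map_smul, Submodule.subtype_apply] at this
      exact this.symm
    conv_lhs => rw [hw']
    rw [TensorProduct.tmul_sum]
    exact Finset.sum_congr rfl fun i _ => by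
      simp only [TensorProduct.tmul_smul, TensorProduct.smul_tmul', algebraMap_smul]
  exact this hx

lemma mapRight_mem_tensorSub (q : W →ₗ[F] W) (hq : ∀ v ∈ X, q v ∈ Y)
    {x : D ⊗[F] W} (hx : x ∈ tensorSub F A X) :
    mapRight (S := S) q x ∈ tensorSub F A Y := by
  have : tensorSub F A X ≤ Submodule.comap (mapRight (S := S) q) (tensorSub F A Y) := by
    refine Submodule.span_le.2 ?_
    rintro y ⟨d, hd, w, hw, rfl⟩
    simp only [SetLike.mem_coe, Submodule.mem_comap, mapRight_tmul]
    exact tmul_mem_tensorSub hd (hq w hw)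
  exact this hx

lemma mapRight_eq_self (q : W →ₗ[F] W) (hq : ∀ v ∈ X, q v = v)
    {x : D ⊗[F] W} (hx : x ∈ tensorSub F A X) :
    mapRight (S := S) q x = x := by
  have : tensorSub F A X ≤ LinearMap.ker (mapRight (S := S) q - LinearMap.id) := by
    refine Submodule.span_le.2 ?_
    rintro y ⟨d, hd, w, hw, rfl⟩
    simp only [SetLike.mem_coe, LinearMap.mem_ker, LinearMap.sub_apply, mapRight_tmul,
      LinearMap.id_apply, hq w hw, sub_self]
  have h := this hx
  simpa [LinearMap.mem_ker, LinearMap.sub_apply, sub_eq_zero] using h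

/-- extend a subspace disjoint from `Y` to a complement of `Y`. -/
lemma exists_compl_of_disjoint (X Y : Submodule F W) (h : X ⊓ Y = ⊥) :
    ∃ C, X ≤ C ∧ IsCompl C Y := by
  obtain ⟨E, hE⟩ := Submodule.exists_isCompl (X ⊔ Y)
  refine ⟨X ⊔ E, le_sup_left, ?_, ?_⟩
  · -- disjoint
    rw [disjoint_iff]
    rw [eq_bot_iff]
    rintro v hv
    obtain ⟨hv1, hv2⟩ := Submodule.mem_inf.1 hv
    obtain ⟨x, hx, e, he, rfl⟩ := Submodule.mem_sup.1 hv1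
    have heXY : e ∈ (X ⊔ Y) ⊓ E := by
      refine Submodule.mem_inf.2 ⟨?_, he⟩
      have : e = (x + e) - x := by abel
      rw [this]
      exact Submodule.sub_mem _ (Submodule.mem_sup_right hv2) (Submodule.mem_sup_left hx)
    rw [hE.inf_eq_bot] at heXY
    simp only [Submodule.mem_bot] at heXY
    subst heXY
    have : x ∈ X ⊓ Y := Submodule.mem_inf.2 ⟨hx, by simpa using hv2⟩
    rw [h] at this
    simp only [Submodule.mem_bot] at this
    simp [this]
  · -- codisjoint
    rw [codisjoint_iff]
    rw [eq_top_iff]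
    intro v _
    have : v ∈ (X ⊔ Y) ⊔ E := by rw [hE.sup_eq_top]; trivial
    have : v ∈ (X ⊔ E) ⊔ Y := by
      rwa [sup_assoc, sup_comm Y E, ← sup_assoc] at this
    exact this

/-- a projection onto `Y` along a complement containing `X`, when `X ⊓ Y = ⊥`. -/
lemma exists_proj_disjoint (X Y : Submodule F W) (h : X ⊓ Y = ⊥) :
    ∃ p : W →ₗ[F] W, (∀ v ∈ Y, p v = v) ∧ (∀ v ∈ X, p v = 0) ∧ (∀ v, p v ∈ Y) := by
  obtain ⟨C, hXC, hC⟩ := exists_compl_of_disjoint X Y h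
  refine ⟨Y.subtype ∘ₗ Submodule.projectionOnto Y C hC.symm, ?_, ?_, ?_⟩
  · intro v hv
    simp [Submodule.projectionOnto_apply_of_mem_left hC.symm hv]
  · intro v hv
    simp [Submodule.projectionOnto_apply_of_mem_right hC.symm (hXC hv)]
  · intro v
    simp only [LinearMap.coe_comp, Function.comp_apply, Submodule.coe_subtype]
    exact Submodule.coe_mem _

lemma tensorSub_inf_le (A : Submodule S D) (X Y : Submodule F W) :
    tensorSub F A X ⊓ tensorSub F A Y ≤ tensorSub F A (X ⊓ Y) := by
  rintro x ⟨hx1, hx2⟩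
  -- choose complement C' of X ⊓ Y inside X
  obtain ⟨C₀, hC₀⟩ := Submodule.exists_isCompl (Submodule.comap X.subtype (X ⊓ Y))
  set C' : Submodule F W := C₀.map X.subtype with hC'def
  have hC'X : C' ≤ X := by
    rintro v ⟨⟨u, hu⟩, _, rfl⟩; exact hu
  have hC'Y : C' ⊓ Y = ⊥ := by
    rw [eq_bot_iff]
    rintro v ⟨hv1, hv2⟩
    obtain ⟨⟨u, hu⟩, hmem, rfl⟩ := hv1
    have : (⟨u, hu⟩ : ↥X) ∈ Submodule.comap X.subtype (X ⊓ Y) := by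
      simp only [Submodule.mem_comap, Submodule.coe_subtype]
      exact Submodule.mem_inf.2 ⟨hu, hv2⟩
    have : (⟨u, hu⟩ : ↥X) ∈ C₀ ⊓ Submodule.comap X.subtype (X ⊓ Y) := ⟨hmem, this⟩
    rw [inf_comm, hC₀.inf_eq_bot] at this
    simpa using this
  have hXsplit : ∀ v ∈ X, ∃ z ∈ X ⊓ Y, ∃ c ∈ C', v = z + c := by
    intro v hv
    have : (⟨v, hv⟩ : ↥X) ∈ (Submodule.comap X.subtype (X ⊓ Y)) ⊔ C₀ := by
      rw [hC₀.sup_eq_top]; trivial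
    obtain ⟨⟨z, hz⟩, hz2, ⟨c, hc⟩, hc2, hzc⟩ := Submodule.mem_sup.1 this
    refine ⟨z, Submodule.mem_inf.2 ⟨hz, by simpa using hz2⟩, c, ⟨⟨c, hc⟩, hc2, rfl⟩, ?_⟩
    have := congrArg (X.subtype) hzc
    simpa using this.symm
  obtain ⟨p, hpY, hpC', hprange⟩ := exists_proj_disjoint C' Y hC'Y
  have h1 : mapRight (S := S) p x = x := mapRight_eq_self p hpY hx2
  have h2 : mapRight (S := S) p x ∈ tensorSub F A (X ⊓ Y) := by
    refine mapRight_mem_tensorSub p ?_ hx1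
    intro v hv
    obtain ⟨z, hz, c, hc, rfl⟩ := hXsplit v hv
    rw [map_add, hpC' c hc, add_zero]
    have hzY : z ∈ Y := (Submodule.mem_inf.1 hz).2
    rw [hpY z hzY]
    exact hz
  rwa [h1] at h2

lemma tensorSub_pure {w : W} {x : D ⊗[F] W}
    (hx : x ∈ tensorSub F A (Submodule.span F {w})) : ∃ a ∈ A, x = a ⊗ₜ[F] w := by
  let Z : Submodule S (D ⊗[F] W) :=
    { carrier := {x | ∃ a ∈ A, x = a ⊗ₜ[F] w}
      add_mem' := by
        rintro x y ⟨a, ha, rfl⟩ ⟨c, hc, rfl⟩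
        exact ⟨a + c, A.add_mem ha hc, (TensorProduct.add_tmul _ _ _).symm⟩
      zero_mem' := ⟨0, A.zero_mem, by simp⟩
      smul_mem' := by
        rintro s x ⟨a, ha, rfl⟩
        exact ⟨s • a, A.smul_mem s ha, by rw [TensorProduct.smul_tmul']⟩ }
  have : tensorSub F A (Submodule.span F {w}) ≤ Z := by
    refine Submodule.span_le.2 ?_
    rintro y ⟨d, hd, v, hv, rfl⟩
    obtain ⟨c, rfl⟩ := Submodule.mem_span_singleton.1 hv
    refine ⟨algebraMap F S c • d, A.smul_mem _ hd, ?_⟩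
    rw [TensorProduct.tmul_smul, TensorProduct.smul_tmul', algebraMap_smul]
  exact this hx

lemma span_singleton_eq_of_simple {A : Submodule S D} (hA : IsSimpleModule S ↥A)
    {α : D} (hαA : α ∈ A) (hα : α ≠ 0) : Submodule.span S {α} = A := by
  have h1 : Submodule.span S {(⟨α, hαA⟩ : ↥A)} = (⊤ : Submodule S ↥A) := by
    rcases hA.1.2 (Submodule.span S {(⟨α, hαA⟩ : ↥A)}) with h | h
    · exfalso
      have : (⟨α, hαA⟩ : ↥A) ∈ Submodule.span S {(⟨α, hαA⟩ : ↥A)} :=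
        Submodule.mem_span_singleton_self _
      rw [h] at this
      simp only [Submodule.mem_bot] at this
      exact hα (congrArg Subtype.val this)
    · exact h
  have := congrArg (Submodule.map A.subtype) h1
  rwa [Submodule.map_span, Set.image_singleton, Submodule.map_subtype_top] at this

/-- Connecting homomorphism: if `s • d = 0 → s • t = 0` for all `s`, then `s • d ↦ s • t`
is a well-defined `S`-linear map from `span S {d}` to `N`. -/
noncomputable def connMap {N : Type*} [AddCommGroup N] [Module S N] (d : D) (t : N)
    (h : ∀ s : S, s • d = 0 → s • t = 0) :
    ↥(Submodule.span S {d}) →ₗ[S] N :=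
  (Submodule.liftQ (LinearMap.ker (LinearMap.toSpanSingleton S D d))
      (LinearMap.toSpanSingleton S N t)
      (fun s hs => by
        simp only [LinearMap.mem_ker, LinearMap.toSpanSingleton_apply] at hs ⊢
        exact h s hs)) ∘ₗ
    ((LinearMap.quotKerEquivRange (LinearMap.toSpanSingleton S D d)).symm.toLinearMap ∘ₗ
      (LinearEquiv.ofEq _ _ (LinearMap.span_singleton_eq_range S D d)).toLinearMap)

lemma connMap_apply {N : Type*} [AddCommGroup N] [Module S N] (d : D) (t : N)
    (h : ∀ s : S, s • d = 0 → s • t = 0) (s : S) (hmem : s • d ∈ Submodule.span S {d}) :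
    connMap d t h ⟨s • d, hmem⟩ = s • t := by
  unfold connMap
  simp only [LinearMap.coe_comp, Function.comp_apply, LinearEquiv.coe_coe]
  have h1 : (LinearEquiv.ofEq _ _ (LinearMap.span_singleton_eq_range S D d))
      ⟨s • d, hmem⟩ = ⟨s • d, by rw [← LinearMap.span_singleton_eq_range]; exact hmem⟩ := rfl
  rw [h1]
  have h2 : (LinearMap.quotKerEquivRange (LinearMap.toSpanSingleton S D d)).symm
      ⟨s • d, by rw [← LinearMap.span_singleton_eq_range]; exact hmem⟩ =
      Submodule.Quotient.mk s := by
    rw [LinearEquiv.symm_apply_eq]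
    rfl
  rw [h2]
  rw [Submodule.liftQ_apply]
  simp [LinearMap.toSpanSingleton_apply]

/-- The subspace of `w ∈ W` with `A ⊗ w ⊆ M`. -/
def Uof (A : Submodule S D) (M : Submodule S (D ⊗[F] W)) : Submodule F W where
  carrier := {u | ∀ a ∈ A, a ⊗ₜ[F] u ∈ M}
  add_mem' := by
    intro u v hu hv a ha
    rw [TensorProduct.tmul_add]
    exact M.add_mem (hu a ha) (hv a ha)
  zero_mem' := by intro a _; rw [TensorProduct.tmul_zero]; exact M.zero_mem
  smul_mem' := by
    intro c u hu a ha
    rw [TensorProduct.tmul_smul, ← algebraMap_smul S c (a ⊗ₜ[F] u)]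
    exact M.smul_mem _ (hu a ha)

lemma mem_Uof {A : Submodule S D} {M : Submodule S (D ⊗[F] W)} {u : W} :
    u ∈ Uof A M ↔ ∀ a ∈ A, a ⊗ₜ[F] u ∈ M := Iff.rfl

lemma tensorSub_Uof_le {A : Submodule S D} {M : Submodule S (D ⊗[F] W)}
    {U' : Submodule F W} (hU' : U' ≤ Uof A M) : tensorSub F A U' ≤ M := by
  refine Submodule.span_le.2 ?_
  rintro x ⟨d, hd, w, hw, rfl⟩
  exact hU' hw d hd

lemma mapRight_sub (q₁ q₂ : W →ₗ[F] W) :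
    mapRight (D := D) (S := S) (q₁ - q₂) = mapRight q₁ - mapRight q₂ := by
  apply LinearMap.restrictScalars_injective F
  apply TensorProduct.ext'
  intro d w
  simp only [LinearMap.coe_restrictScalars, LinearMap.sub_apply, mapRight_tmul,
    TensorProduct.tmul_sub]

lemma mapRight_id : mapRight (D := D) (S := S) (LinearMap.id : W →ₗ[F] W) = LinearMap.id := by
  apply LinearMap.restrictScalars_injective F
  apply TensorProduct.ext'
  intro d w
  simp only [LinearMap.coe_restrictScalars, mapRight_tmul, LinearMap.id_apply]

section SCL
variable [FiniteDimensional F W]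

lemma scl_aux (A : Submodule S D) (hA : IsSimpleModule S ↥A)
    (hAEnd : ∀ φ : ↥A →ₗ[S] ↥A, ∃ c : F, ∀ x, φ x = algebraMap F S c • x)
    (M : Submodule S (D ⊗[F] W)) :
    ∀ (n : ℕ) (V : Submodule F W), Module.finrank F ↥V ≤ n →
      M ⊓ tensorSub F A V ≤ tensorSub F A (Uof A M) := by
  intro n
  induction n with
  | zero =>
    intro V hV x hx
    have hV0 : V = ⊥ := by
      have : Module.finrank F ↥V = 0 := Nat.le_zero.1 hV
      exact Submodule.finrank_eq_zero.1 this
    have h2 := hx.2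
    rw [hV0, tensorSub_bot_right] at h2
    have hx0 : x = 0 := (Submodule.mem_bot _).1 h2
    rw [hx0]
    exact Submodule.zero_mem _
  | succ n ih =>
    intro V hV x hx
    obtain ⟨hxM, hxT⟩ := hx
    -- basis of V
    set k := Module.finrank F ↥V with hk
    let bV : Module.Basis (Fin k) F ↥V := Module.finBasis F ↥V
    obtain ⟨a, haA, hxsum⟩ := tensorSub_repr bV hxT
    -- dual functionals
    obtain ⟨C, hC⟩ := Submodule.exists_isCompl V
    let πV : W →ₗ[F] ↥V := Submodule.projectionOnto V C hC
    let φ : Fin k → (W →ₗ[F] F) := fun i => bV.coord i ∘ₗ πV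
    have hφ : ∀ i j, φ i (bV j : W) = if j = i then 1 else 0 := by
      intro i j
      simp only [φ, LinearMap.coe_comp, Function.comp_apply, πV]
      rw [Submodule.projectionOnto_apply_left hC (bV j)]
      rw [Module.Basis.coord_apply, Module.Basis.repr_self]
      exact Finsupp.single_apply
    have hcoord : ∀ i, coordMap (S := S) (φ i) x = a i := by
      intro i
      rw [hxsum, map_sum]
      rw [Finset.sum_congr rfl (fun j _ => by rw [coordMap_tmul, hφ i j])]
      simp [ite_smul]
    by_cases hall : ∀ i, a i = 0
    · have : x = 0 := by
        rw [hxsum]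
        exact Finset.sum_eq_zero fun i _ => by rw [hall i, TensorProduct.zero_tmul]
      rw [this]; exact Submodule.zero_mem _
    push_neg at hall
    obtain ⟨i₀, hi₀⟩ := hall
    have hspan : Submodule.span S {a i₀} = A := span_singleton_eq_of_simple hA (haA i₀) hi₀
    by_cases hcase : ∀ s : S, s • a i₀ = 0 → s • x = 0
    · -- case (a): x is a pure tensor
      have hconn : ∀ i, ∀ s : S, s • a i₀ = 0 → s • a i = 0 := by
        intro i s hs
        have h1 : coordMap (S := S) (φ i) (s • x) = s • a i := by
          rw [map_smul, hcoord i]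
        rw [hcase s hs, map_zero] at h1
        exact h1.symm
      -- build scalars
      have hsc : ∀ i, ∃ c : F, a i = algebraMap F S c • a i₀ := by
        intro i
        let f : ↥(Submodule.span S {a i₀}) →ₗ[S] D := connMap (a i₀) (a i) (hconn i)
        have hfA : ∀ y : ↥(Submodule.span S {a i₀}), f y ∈ A := by
          rintro ⟨y, hy⟩
          obtain ⟨s, rfl⟩ := Submodule.mem_span_singleton.1 hy
          rw [connMap_apply (a i₀) (a i) (hconn i) s (by exact Submodule.smul_mem _ _ (Submodule.mem_span_singleton_self _))]
          exact A.smul_mem s (haA i)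
        let e : ↥A ≃ₗ[S] ↥(Submodule.span S {a i₀}) := LinearEquiv.ofEq _ _ hspan.symm
        let ψ : ↥A →ₗ[S] ↥A := LinearMap.codRestrict A (f ∘ₗ e.toLinearMap)
          (fun y => hfA (e y))
        obtain ⟨c, hc⟩ := hAEnd ψ
        refine ⟨c, ?_⟩
        have h1 : ψ ⟨a i₀, haA i₀⟩ = algebraMap F S c • ⟨a i₀, haA i₀⟩ := hc _
        have h2 : (ψ ⟨a i₀, haA i₀⟩ : D) = a i := by
          show (f (e ⟨a i₀, haA i₀⟩) : D) = a i
          have he : e ⟨a i₀, haA i₀⟩ =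
              ⟨(1 : S) • a i₀, by rw [one_smul]; exact Submodule.mem_span_singleton_self _⟩ := by
            apply Subtype.ext
            simp [e, one_smul]
          rw [he, connMap_apply (a i₀) (a i) (hconn i) 1 _, one_smul]
        rw [h1] at h2
        rw [← h2]
        rfl
      choose c hc using hsc
      have hxpure : x = a i₀ ⊗ₜ[F] (∑ i, c i • (bV i : W)) := by
        rw [hxsum, TensorProduct.tmul_sum]
        exact Finset.sum_congr rfl fun i _ => by
          rw [hc i, TensorProduct.tmul_smul, TensorProduct.smul_tmul', algebraMap_smul]
      have hwU : (∑ i, c i • (bV i : W)) ∈ Uof A M := by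
        intro α hα
        rw [← hspan] at hα
        obtain ⟨s, rfl⟩ := Submodule.mem_span_singleton.1 hα
        have : (s • a i₀) ⊗ₜ[F] (∑ i, c i • (bV i : W)) = s • x := by
          rw [hxpure, TensorProduct.smul_tmul']
        rw [this]
        exact M.smul_mem s hxM
      rw [hxpure]
      exact tmul_mem_tensorSub (haA i₀) hwU
    · -- case (b)
      push_neg at hcase
      obtain ⟨s₀, hs₀, hy0⟩ := hcase
      set y := s₀ • x with hy
      have hyM : y ∈ M := M.smul_mem s₀ hxM
      -- tail subspace
      classical
      set Vtail : Submodule F W :=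
        Submodule.span F ↑(Finset.image (fun i => (bV i : W)) (Finset.univ.erase i₀))
        with hVtail
      have hysum : y = ∑ i, (s₀ • a i) ⊗ₜ[F] (bV i : W) := by
        rw [hy, hxsum, Finset.smul_sum]
        exact Finset.sum_congr rfl fun i _ => by rw [TensorProduct.smul_tmul']
      have hyVt : y ∈ tensorSub F A Vtail := by
        rw [hysum]
        refine Submodule.sum_mem _ fun i _ => ?_
        by_cases hii : i = i₀
        · subst hii; rw [hs₀, TensorProduct.zero_tmul]; exact Submodule.zero_mem _
        · refine tmul_mem_tensorSub (A.smul_mem s₀ (haA i)) (Submodule.subset_span ?_)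
          simp only [Finset.coe_image, Set.mem_image, Finset.mem_coe, Finset.mem_erase]
          exact ⟨i, by simp [hii]⟩
      have hVtV : Vtail ≤ V := by
        refine Submodule.span_le.2 ?_
        intro v hv
        simp only [Finset.coe_image, Set.mem_image, Finset.mem_coe, Finset.mem_erase] at hv
        obtain ⟨i, _, rfl⟩ := hv
        exact Submodule.coe_mem _
      have hVtrank : Module.finrank F ↥Vtail ≤ n := by
        have h1 := finrank_span_finset_le_card (R := F)
          (Finset.image (fun i => (bV i : W)) (Finset.univ.erase i₀))
        have h2 : (Finset.image (fun i => (bV i : W)) (Finset.univ.erase i₀)).card ≤ k - 1 := by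
          refine le_trans Finset.card_image_le ?_
          rw [Finset.card_erase_of_mem (Finset.mem_univ _), Finset.card_univ, Fintype.card_fin]
        have hk1 : 1 ≤ k := i₀.pos
        have hVle : Module.finrank F ↥Vtail ≤ k - 1 := le_trans h1 h2
        omega
      have hyU : y ∈ tensorSub F A (Uof A M) :=
        ih Vtail hVtrank ⟨hyM, hyVt⟩
      have hyZ : y ∈ tensorSub F A (Uof A M ⊓ Vtail) :=
        tensorSub_inf_le A (Uof A M) Vtail ⟨hyU, hyVt⟩
      have hZ : (Uof A M ⊓ Vtail : Submodule F W) ≠ ⊥ := by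
        intro hbot
        rw [hbot, tensorSub_bot_right] at hyZ
        simp only [Submodule.mem_bot] at hyZ
        exact hy0 hyZ
      obtain ⟨z, hzZ, hz0⟩ := (Submodule.ne_bot_iff _).1 hZ
      have hzU : z ∈ Uof A M := ((Submodule.mem_inf).1 hzZ).1
      have hzV : z ∈ V := hVtV ((Submodule.mem_inf).1 hzZ).2
      -- projection onto span z
      obtain ⟨Cz, hCz⟩ := Submodule.exists_isCompl (Submodule.span F {z})
      obtain ⟨p, hp1, hp2, hp3⟩ := exists_proj_disjoint Cz (Submodule.span F {z})
        (by rw [inf_comm]; exact hCz.inf_eq_bot)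
      set Px := mapRight (S := S) p x with hPx
      have hPxT : Px ∈ tensorSub F A (Submodule.span F {z}) :=
        mapRight_mem_tensorSub p (fun v _ => hp3 v) hxT
      obtain ⟨α, hαA, hPxeq⟩ := tensorSub_pure hPxT
      have hPxM : Px ∈ M := by rw [hPxeq]; exact hzU α hαA
      -- the rest
      set V' : Submodule F W := V ⊓ Cz with hV'
      have hx' : x - Px ∈ tensorSub F A V' := by
        have : x - Px = mapRight (S := S) (LinearMap.id - p) x := by
          rw [mapRight_sub, mapRight_id, LinearMap.sub_apply, LinearMap.id_apply]
        rw [this]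
        refine mapRight_mem_tensorSub _ ?_ hxT
        intro v hv
        have hdecomp : v ∈ Submodule.span F {z} ⊔ Cz := by rw [hCz.sup_eq_top]; trivial
        obtain ⟨ζ, hζ, cc, hcc, rfl⟩ := Submodule.mem_sup.1 hdecomp
        have hpv : p (ζ + cc) = ζ := by
          rw [map_add, hp1 ζ hζ, hp2 cc hcc, add_zero]
        simp only [LinearMap.sub_apply, LinearMap.id_apply, hpv]
        have : ζ + cc - ζ = cc := by abel
        rw [this]
        refine Submodule.mem_inf.2 ⟨?_, hcc⟩
        have hζV : ζ ∈ V := by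
          obtain ⟨cz, rfl⟩ := Submodule.mem_span_singleton.1 hζ
          exact Submodule.smul_mem _ _ hzV
        have : ζ + cc - ζ = cc := by abel
        rw [← this]
        exact Submodule.sub_mem _ hv hζV
      have hV'rank : Module.finrank F ↥V' ≤ n := by
        have hsup : V' ⊔ Submodule.span F {z} = V := by
          apply le_antisymm
          · refine sup_le inf_le_left ?_
            rw [Submodule.span_le, Set.singleton_subset_iff]
            exact hzV
          · intro v hv
            have hdecomp : v ∈ Submodule.span F {z} ⊔ Cz := by rw [hCz.sup_eq_top]; trivial
            obtain ⟨ζ, hζ, cc, hcc, rfl⟩ := Submodule.mem_sup.1 hdecomp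
            have hζV : ζ ∈ V := by
              obtain ⟨cz, rfl⟩ := Submodule.mem_span_singleton.1 hζ
              exact Submodule.smul_mem _ _ hzV
            have hccV : cc ∈ V := by
              have : ζ + cc - ζ = cc := by abel
              rw [← this]
              exact Submodule.sub_mem _ hv hζV
            exact Submodule.add_mem _ (Submodule.mem_sup_right hζ)
              (Submodule.mem_sup_left (Submodule.mem_inf.2 ⟨hccV, hcc⟩))
        have hinf : V' ⊓ Submodule.span F {z} = ⊥ := by
          rw [eq_bot_iff]
          intro v hv
          have h1 : v ∈ Cz ⊓ Submodule.span F {z} :=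
            Submodule.mem_inf.2 ⟨(Submodule.mem_inf.1 hv.1).2, hv.2⟩
          rw [inf_comm, hCz.inf_eq_bot] at h1
          exact h1
        have hz1 : Module.finrank F ↥(Submodule.span F {z}) = 1 := finrank_span_singleton hz0
        have := Submodule.finrank_sup_add_finrank_inf_eq V' (Submodule.span F {z})
        rw [hsup, hinf, hz1] at this
        simp only [finrank_bot, add_zero] at this
        omega
      have hx'U : x - Px ∈ tensorSub F A (Uof A M) :=
        ih V' hV'rank ⟨Submodule.sub_mem _ hxM hPxM, hx'⟩
      have : x = (x - Px) + Px := by abel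
      rw [this]
      refine Submodule.add_mem _ hx'U ?_
      rw [hPxeq]
      exact tmul_mem_tensorSub hαA hzU

lemma scl (A : Submodule S D) (hA : IsSimpleModule S ↥A)
    (hAEnd : ∀ φ : ↥A →ₗ[S] ↥A, ∃ c : F, ∀ x, φ x = algebraMap F S c • x)
    (M : Submodule S (D ⊗[F] W)) :
    M ⊓ tensorSub F A ⊤ = tensorSub F A (Uof A M) := by
  apply le_antisymm
  · exact scl_aux A hA hAEnd M (Module.finrank F ↥(⊤ : Submodule F W)) ⊤ le_rfl
  · refine le_inf (tensorSub_Uof_le le_rfl) (tensorSub_mono le_top)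
end SCL

lemma exists_dual_one (w : W) (hw : w ≠ 0) : ∃ ψ : W →ₗ[F] F, ψ w = 1 := by
  obtain ⟨C, hC⟩ := Submodule.exists_isCompl (Submodule.span F {w})
  refine ⟨((LinearEquiv.toSpanNonzeroSingleton F W w hw).symm :
      Submodule.span F {w} →ₗ[F] F) ∘ₗ Submodule.projectionOnto _ _ hC, ?_⟩
  simp only [LinearMap.coe_comp, Function.comp_apply]
  rw [Submodule.projectionOnto_apply_of_mem_left hC (Submodule.mem_span_singleton_self w)]
  show (LinearEquiv.toSpanNonzeroSingleton F W w hw).symm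
      ⟨w, Submodule.mem_span_singleton_self w⟩ = 1
  rw [LinearEquiv.symm_apply_eq]
  exact (LinearEquiv.toSpanNonzeroSingleton_one F W w hw).symm
end

universe uD

/-- Inductive structure on `D` expressing: there is a composition-like chain of length `n`,
whose bottom `A` is a simple submodule with scalar endomorphisms, which admits no
"ghost" maps from submodules of `D` (vanishing on `A`) onto `A`, and whose quotient
inherits the structure. -/
def Good (F : Type*) (S : Type*) [Field F] [Ring S] [Algebra F S] :
    ℕ → ∀ (D : Type uD) [AddCommGroup D] [Module F D] [Module S D] [IsScalarTower F S D], Prop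
  | 0, D, _, _, _, _ => Subsingleton D
  | (n+1), D, iAG, iMF, iMS, iT =>
      letI := iAG; letI := iMF; letI := iMS; letI := iT
      ∃ A : Submodule S D, IsSimpleModule S ↥A ∧
        (∀ φ : ↥A →ₗ[S] ↥A, ∃ c : F, ∀ x, φ x = algebraMap F S c • x) ∧
        (∀ (Y : Submodule S D) (f : ↥Y →ₗ[S] D), LinearMap.range f = A →
          (∀ y : ↥Y, (y : D) ∈ A → f y = 0) → False) ∧
        Good F S n (D ⧸ A)

theorem master {F : Type*} [Field F] {S : Type*} [Ring S] [Algebra F S]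
    {W : Type*} [AddCommGroup W] [Module F W] [FiniteDimensional F W] :
    ∀ (n : ℕ) (D : Type uD) [AddCommGroup D] [Module F D] [Module S D] [IsScalarTower F S D],
      Good F S n D → ∀ M : Submodule S (D ⊗[F] W),
      M ≤ Submodule.span S {x : D ⊗[F] W | (∃ d w, d ⊗ₜ[F] w = x) ∧ x ∈ M} := by
  intro n
  induction n with
  | zero =>
    intro D _ _ _ _ hG M x hx
    have hD : Subsingleton D := hG
    have hx0 : x = 0 := by
      have : ∀ y : D ⊗[F] W, y = 0 := by
        intro y
        induction y using TensorProduct.induction_on with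
        | zero => rfl
        | tmul d w => rw [Subsingleton.elim d 0, TensorProduct.zero_tmul]
        | add u v hu hv => rw [hu, hv, add_zero]
      exact this x
    rw [hx0]; exact Submodule.zero_mem _
  | succ n ih =>
    intro D _ _ _ _ hG M
    obtain ⟨A, hA, hAEnd, hQ, hGood'⟩ := hG
    set N := Submodule.span S {x : D ⊗[F] W | (∃ d w, d ⊗ₜ[F] w = x) ∧ x ∈ M} with hN
    have hNM : N ≤ M := Submodule.span_le.2 fun x hx => hx.2
    -- the quotient map
    set π : D ⊗[F] W →ₗ[S] (D ⧸ A) ⊗[F] W :=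
      TensorProduct.AlgebraTensorModule.map A.mkQ LinearMap.id with hπ
    have hπtmul : ∀ (d : D) (w : W), π (d ⊗ₜ[F] w) = (A.mkQ d) ⊗ₜ[F] w := fun _ _ => rfl
    have hres : (π.restrictScalars F) =
        LinearMap.rTensor W ((A.mkQ : D →ₗ[S] D ⧸ A).restrictScalars F) :=
      TensorProduct.ext' fun d w => rfl
    have hπfun : ∀ x, π x =
        LinearMap.rTensor W ((A.mkQ : D →ₗ[S] D ⧸ A).restrictScalars F) x :=
      fun x => LinearMap.congr_fun hres x
    have hπsurj : Function.Surjective π := by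
      intro y
      obtain ⟨x, hx⟩ := LinearMap.rTensor_surjective (g := (A.mkQ : D →ₗ[S] D ⧸ A).restrictScalars F) W
        (fun z => by obtain ⟨d, hd⟩ := A.mkQ_surjective z; exact ⟨d, hd⟩) y
      exact ⟨x, by rw [hπfun]; exact hx⟩
    have hexact : Function.Exact ((A.subtype : ↥A →ₗ[S] D).restrictScalars F)
        ((A.mkQ : D →ₗ[S] D ⧸ A).restrictScalars F) := by
      rw [LinearMap.exact_iff]
      ext x
      constructor
      · intro hx
        have : x ∈ A := by
          have hx' : A.mkQ x = 0 := hx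
          exact (Submodule.Quotient.mk_eq_zero A).1 hx'
        exact ⟨⟨x, this⟩, rfl⟩
      · rintro ⟨⟨a, ha⟩, rfl⟩
        show A.mkQ a = 0
        exact (Submodule.Quotient.mk_eq_zero A).2 ha
    have hkerπ : LinearMap.ker π = tensorSub F A ⊤ := by
      apply le_antisymm
      · intro x hx
        have hx' : x ∈ LinearMap.ker
            (LinearMap.rTensor W ((A.mkQ : D →ₗ[S] D ⧸ A).restrictScalars F)) := by
          simp only [LinearMap.mem_ker] at hx ⊢
          rw [← hπfun x]
          exact hx
        rw [(rTensor_exact W hexact (fun y => by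
          obtain ⟨d, hd⟩ := A.mkQ_surjective y; exact ⟨d, hd⟩)).linearMap_ker_eq] at hx'
        obtain ⟨t, rfl⟩ := hx'
        clear hx
        induction t using TensorProduct.induction_on with
        | zero => rw [map_zero]; exact Submodule.zero_mem _
        | tmul a w =>
          rw [LinearMap.rTensor_tmul]
          exact tmul_mem_tensorSub a.2 trivial
        | add u v hu hv => rw [map_add]; exact Submodule.add_mem _ hu hv
      · refine Submodule.span_le.2 ?_
        rintro x ⟨d, hd, w, _, rfl⟩
        simp only [SetLike.mem_coe, LinearMap.mem_ker, hπtmul]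
        rw [show A.mkQ d = 0 from (Submodule.Quotient.mk_eq_zero A).2 hd,
          TensorProduct.zero_tmul]
    -- structure of M ∩ A⊗W
    have hscl : M ⊓ tensorSub F A ⊤ = tensorSub F A (Uof A M) := scl A hA hAEnd M
    have hTUN : tensorSub F A (Uof A M) ≤ N := by
      refine Submodule.span_le.2 ?_
      rintro x ⟨a, ha, u, hu, rfl⟩
      exact Submodule.subset_span ⟨⟨a, u, rfl⟩, hu a ha⟩
    -- full basis of W for coordinate extraction
    let bW : Module.Basis (Fin (Module.finrank F W)) F W := Module.finBasis F W
    -- KEY: pure lifting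
    have hPL : ∀ p : (D ⧸ A) ⊗[F] W, (∃ d w, d ⊗ₜ[F] w = p) → p ∈ M.map π →
        p ∈ N.map π := by
      rintro p ⟨dq, w, rfl⟩ hpM
      obtain ⟨d, rfl⟩ := A.mkQ_surjective dq
      by_cases hw0 : w = 0
      · subst hw0
        rw [TensorProduct.tmul_zero]
        exact Submodule.zero_mem _
      obtain ⟨m, hmM, hπm⟩ := hpM
      have hker : m - d ⊗ₜ[F] w ∈ tensorSub F A ⊤ := by
        rw [← hkerπ]
        simp only [LinearMap.mem_ker, map_sub, hπm, hπtmul, sub_self]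
      set t := m - d ⊗ₜ[F] w with ht
      -- case split on w ∈ U
      by_cases hwU : w ∈ Uof A M
      · -- w ∈ U
        obtain ⟨V, hV⟩ := Submodule.exists_isCompl (Uof A M)
        obtain ⟨q, hq1, hq2, hq3⟩ := exists_proj_disjoint (Uof A M) V hV.inf_eq_bot
        set tV := mapRight (S := S) q t with htV
        have htVT : tV ∈ tensorSub F A V :=
          mapRight_mem_tensorSub q (fun v _ => hq3 v) hker
        have htU : t - tV ∈ tensorSub F A (Uof A M) := by
          have heq : t - tV = mapRight (S := S) (LinearMap.id - q) t := by
            rw [mapRight_sub, mapRight_id, LinearMap.sub_apply, LinearMap.id_apply]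
          rw [heq]
          refine mapRight_mem_tensorSub _ ?_ hker
          intro v _
          have hdecomp : v ∈ (Uof A M) ⊔ V := by rw [hV.sup_eq_top]; trivial
          obtain ⟨u, hu, vv, hvv, rfl⟩ := Submodule.mem_sup.1 hdecomp
          have : q (u + vv) = vv := by rw [map_add, hq2 u hu, hq1 vv hvv, zero_add]
          simp only [LinearMap.sub_apply, LinearMap.id_apply, this]
          have huv : u + vv - vv = u := by abel
          rw [huv]; exact hu
        have htUM : t - tV ∈ M := tensorSub_Uof_le le_rfl htU
        have hm' : d ⊗ₜ[F] w + tV ∈ M := by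
          have : d ⊗ₜ[F] w + tV = m - (t - tV) := by rw [ht]; abel
          rw [this]
          exact Submodule.sub_mem _ hmM htUM
        -- show tV = 0
        have hMV : M ⊓ tensorSub F A V ≤ (⊥ : Submodule S (D ⊗[F] W)) := by
          intro v hv
          have h1 : v ∈ tensorSub F A (Uof A M) :=
            hscl ▸ (Submodule.mem_inf.2 ⟨hv.1, tensorSub_mono le_top hv.2⟩)
          have h2 : v ∈ tensorSub F A (Uof A M ⊓ V) :=
            tensorSub_inf_le A _ _ ⟨h1, hv.2⟩
          rw [hV.inf_eq_bot, tensorSub_bot_right] at h2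
          exact h2
        have hzero : ∀ s : S, s • d = 0 → s • tV = 0 := by
          intro s hs
          have h1 : s • (d ⊗ₜ[F] w + tV) = s • tV := by
            rw [smul_add, TensorProduct.smul_tmul', hs, TensorProduct.zero_tmul, zero_add]
          have h2 : s • tV ∈ M := h1 ▸ M.smul_mem s hm'
          have h3 : s • tV ∈ tensorSub F A V := Submodule.smul_mem _ s htVT
          simpa using hMV ⟨h2, h3⟩
        have htV0 : tV = 0 := by
          by_contra htV0
          -- pick a coordinate functional where tV is nonzero
          have hex : ∃ i, coordMap (S := S) (bW.coord i) tV ≠ 0 := by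
            by_contra hall
            push_neg at hall
            apply htV0
            rw [tensorSub_expand (S := S) bW tV]
            exact Finset.sum_eq_zero fun i _ => by
              rw [hall i, TensorProduct.zero_tmul]
          obtain ⟨i₀, hα⟩ := hex
          set α := coordMap (S := S) (bW.coord i₀) tV with hαdef
          have hαA : α ∈ A := coordMap_mem_of_tensorSub _ htVT
          set f : ↥(Submodule.span S {d}) →ₗ[S] D :=
            coordMap (S := S) (bW.coord i₀) ∘ₗ connMap d tV hzero with hf
          have hfapply : ∀ (s : S) (hmem : s • d ∈ Submodule.span S {d}),
              f ⟨s • d, hmem⟩ = s • α := by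
            intro s hmem
            rw [hf]
            simp only [LinearMap.coe_comp, Function.comp_apply]
            rw [connMap_apply d tV hzero s hmem, map_smul]
          have hrange : LinearMap.range f = A := by
            apply le_antisymm
            · rintro x ⟨⟨y, hy⟩, rfl⟩
              obtain ⟨s, rfl⟩ := Submodule.mem_span_singleton.1 hy
              rw [hfapply s hy]
              exact A.smul_mem s hαA
            · rw [← span_singleton_eq_of_simple hA hαA hα]
              rw [Submodule.span_le, Set.singleton_subset_iff]
              refine ⟨⟨d, Submodule.mem_span_singleton_self d⟩, ?_⟩
              have h1 : (⟨d, Submodule.mem_span_singleton_self d⟩ :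
                  ↥(Submodule.span S {d})) = ⟨(1 : S) • d, by
                    rw [one_smul]; exact Submodule.mem_span_singleton_self d⟩ := by
                exact Subtype.ext (one_smul S d).symm
              rw [h1, hfapply 1 _, one_smul]
          have hvan : ∀ y : ↥(Submodule.span S {d}), (y : D) ∈ A → f y = 0 := by
            rintro ⟨y, hy⟩ hyA
            obtain ⟨s, rfl⟩ := Submodule.mem_span_singleton.1 hy
            have h1 : (s • d) ⊗ₜ[F] w ∈ M := hwU (s • d) hyA
            have h2 : s • tV ∈ M := by
              have : s • tV = s • (d ⊗ₜ[F] w + tV) - (s • d) ⊗ₜ[F] w := by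
                rw [smul_add, TensorProduct.smul_tmul']; abel
              rw [this]
              exact Submodule.sub_mem _ (M.smul_mem s hm') h1
            have h3 : s • tV ∈ tensorSub F A V := Submodule.smul_mem _ s htVT
            have h4 : s • tV = 0 := by simpa using hMV ⟨h2, h3⟩
            rw [hfapply s hy, ← map_smul, h4, map_zero]
          exact hQ (Submodule.span S {d}) f hrange hvan
        have hpure : d ⊗ₜ[F] w ∈ M := by rw [← add_zero (d ⊗ₜ[F] w), ← htV0]; exact hm'
        exact ⟨d ⊗ₜ[F] w, Submodule.subset_span ⟨⟨d, w, rfl⟩, hpure⟩, rfl⟩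
      · -- w ∉ U
        set U := Uof A M with hU
        have hUw : U ⊓ Submodule.span F {w} = ⊥ := by
          rw [eq_bot_iff]
          rintro v ⟨hv1, hv2⟩
          obtain ⟨c, rfl⟩ := Submodule.mem_span_singleton.1 hv2
          by_cases hc : c = 0
          · rw [hc, zero_smul]; exact Submodule.zero_mem _
          · exfalso
            apply hwU
            have : w = c⁻¹ • (c • w) := by rw [smul_smul, inv_mul_cancel₀ hc, one_smul]
            rw [this]
            exact Submodule.smul_mem _ _ hv1
        obtain ⟨V, hVcompl⟩ := Submodule.exists_isCompl (U ⊔ Submodule.span F {w})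
        -- projections
        have hdisj1 : (Submodule.span F {w} ⊔ V) ⊓ U = ⊥ := by
          rw [eq_bot_iff]
          rintro v ⟨hv1, hv2⟩
          obtain ⟨cw, hcw, vv, hvv, rfl⟩ := Submodule.mem_sup.1 hv1
          have h1 : vv ∈ V ⊓ (U ⊔ Submodule.span F {w}) := by
            refine Submodule.mem_inf.2 ⟨hvv, ?_⟩
            have : vv = (cw + vv) - cw := by abel
            rw [this]
            exact Submodule.sub_mem _ (Submodule.mem_sup_left hv2)
              (Submodule.mem_sup_right hcw)
          rw [inf_comm, hVcompl.inf_eq_bot] at h1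
          have h2 : vv = 0 := by simpa using h1
          subst h2
          have : cw + 0 ∈ U ⊓ Submodule.span F {w} := by
            rw [add_zero] at hv2 ⊢
            exact Submodule.mem_inf.2 ⟨hv2, hcw⟩
          rw [hUw] at this
          simpa using this
        have hdisj2 : (U ⊔ V) ⊓ Submodule.span F {w} = ⊥ := by
          rw [eq_bot_iff]
          rintro v ⟨hv1, hv2⟩
          obtain ⟨u, hu, vv, hvv, rfl⟩ := Submodule.mem_sup.1 hv1
          have h1 : vv ∈ V ⊓ (U ⊔ Submodule.span F {w}) := by
            refine Submodule.mem_inf.2 ⟨hvv, ?_⟩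
            have : vv = (u + vv) - u := by abel
            rw [this]
            exact Submodule.sub_mem _ (Submodule.mem_sup_right hv2)
              (Submodule.mem_sup_left hu)
          rw [inf_comm, hVcompl.inf_eq_bot] at h1
          have h2 : vv = 0 := by simpa using h1
          subst h2
          have : u + 0 ∈ U ⊓ Submodule.span F {w} := by
            rw [add_zero] at hv2 ⊢
            exact Submodule.mem_inf.2 ⟨hu, hv2⟩
          rw [hUw] at this
          simpa using this
        obtain ⟨pU, hpU1, hpU2, hpU3⟩ := exists_proj_disjoint
          (Submodule.span F {w} ⊔ V) U hdisj1
        obtain ⟨pw, hpw1, hpw2, hpw3⟩ := exists_proj_disjoint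
          (U ⊔ V) (Submodule.span F {w}) hdisj2
        -- decompose any vector
        have hdecomp : ∀ v : W, ∃ u ∈ U, ∃ cw ∈ Submodule.span F {w}, ∃ vv ∈ V,
            v = u + cw + vv := by
          intro v
          have h1 : v ∈ (U ⊔ Submodule.span F {w}) ⊔ V := by
            rw [hVcompl.sup_eq_top]; trivial
          obtain ⟨uw, huw, vv, hvv, rfl⟩ := Submodule.mem_sup.1 h1
          obtain ⟨u, hu, cw, hcw, rfl⟩ := Submodule.mem_sup.1 huw
          exact ⟨u, hu, cw, hcw, vv, hvv, rfl⟩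
        set tU := mapRight (S := S) pU t with htUdef
        set tw := mapRight (S := S) pw t with htwdef
        set tV := t - tU - tw with htVdef
        have htUT : tU ∈ tensorSub F A U :=
          mapRight_mem_tensorSub pU (fun v _ => hpU3 v) hker
        have htwT : tw ∈ tensorSub F A (Submodule.span F {w}) :=
          mapRight_mem_tensorSub pw (fun v _ => hpw3 v) hker
        have htVT : tV ∈ tensorSub F A V := by
          have heq : tV = mapRight (S := S) (LinearMap.id - pU - pw) t := by
            rw [mapRight_sub, mapRight_sub, mapRight_id]
            simp only [LinearMap.sub_apply, LinearMap.id_apply]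
            rfl
          rw [heq]
          refine mapRight_mem_tensorSub _ ?_ hker
          intro v _
          obtain ⟨u, hu, cw, hcw, vv, hvv, rfl⟩ := hdecomp v
          have h1 : pU (u + cw + vv) = u := by
            rw [map_add, map_add, hpU1 u hu,
              hpU2 cw (Submodule.mem_sup_left hcw), hpU2 vv (Submodule.mem_sup_right hvv)]
            abel
          have h2 : pw (u + cw + vv) = cw := by
            rw [map_add, map_add, hpw1 cw hcw,
              hpw2 u (Submodule.mem_sup_left hu), hpw2 vv (Submodule.mem_sup_right hvv)]
            abel
          simp only [LinearMap.sub_apply, LinearMap.id_apply, h1, h2]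
          have : u + cw + vv - u - cw = vv := by abel
          rw [this]; exact hvv
        obtain ⟨a₀, ha₀A, htweq⟩ := tensorSub_pure htwT
        have htUM : tU ∈ M := tensorSub_Uof_le le_rfl htUT
        set d' := d + a₀ with hd'
        have hm' : d' ⊗ₜ[F] w + tV ∈ M := by
          have : d' ⊗ₜ[F] w + tV = m - tU := by
            rw [hd', TensorProduct.add_tmul, htVdef, htweq, ht]; abel
          rw [this]
          exact Submodule.sub_mem _ hmM htUM
        have hUV : U ⊓ V = ⊥ := by
          rw [eq_bot_iff]
          rintro v ⟨hv1, hv2⟩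
          have : v ∈ V ⊓ (U ⊔ Submodule.span F {w}) :=
            Submodule.mem_inf.2 ⟨hv2, Submodule.mem_sup_left hv1⟩
          rw [inf_comm, hVcompl.inf_eq_bot] at this
          exact this
        have hMV : M ⊓ tensorSub F A V ≤ (⊥ : Submodule S (D ⊗[F] W)) := by
          intro v hv
          have h1 : v ∈ tensorSub F A U :=
            hscl ▸ (Submodule.mem_inf.2 ⟨hv.1, tensorSub_mono le_top hv.2⟩)
          have h2 : v ∈ tensorSub F A (U ⊓ V) := tensorSub_inf_le A _ _ ⟨h1, hv.2⟩
          rw [hUV, tensorSub_bot_right] at h2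
          exact h2
        have hzero : ∀ s : S, s • d' = 0 → s • tV = 0 := by
          intro s hs
          have h1 : s • (d' ⊗ₜ[F] w + tV) = s • tV := by
            rw [smul_add, TensorProduct.smul_tmul', hs, TensorProduct.zero_tmul, zero_add]
          have h2 : s • tV ∈ M := h1 ▸ M.smul_mem s hm'
          have h3 : s • tV ∈ tensorSub F A V := Submodule.smul_mem _ s htVT
          simpa using hMV ⟨h2, h3⟩
        have htV0 : tV = 0 := by
          by_contra htV0
          have hex : ∃ i, coordMap (S := S) (bW.coord i) tV ≠ 0 := by
            by_contra hall
            push_neg at hall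
            apply htV0
            rw [tensorSub_expand (S := S) bW tV]
            exact Finset.sum_eq_zero fun i _ => by
              rw [hall i, TensorProduct.zero_tmul]
          obtain ⟨i₀, hα⟩ := hex
          set α := coordMap (S := S) (bW.coord i₀) tV with hαdef
          have hαA : α ∈ A := coordMap_mem_of_tensorSub _ htVT
          set f : ↥(Submodule.span S {d'}) →ₗ[S] D :=
            coordMap (S := S) (bW.coord i₀) ∘ₗ connMap d' tV hzero with hf
          have hfapply : ∀ (s : S) (hmem : s • d' ∈ Submodule.span S {d'}),
              f ⟨s • d', hmem⟩ = s • α := by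
            intro s hmem
            rw [hf]
            simp only [LinearMap.coe_comp, Function.comp_apply]
            rw [connMap_apply d' tV hzero s hmem, map_smul]
          have hrange : LinearMap.range f = A := by
            apply le_antisymm
            · rintro x ⟨⟨y, hy⟩, rfl⟩
              obtain ⟨s, rfl⟩ := Submodule.mem_span_singleton.1 hy
              rw [hfapply s hy]
              exact A.smul_mem s hαA
            · rw [← span_singleton_eq_of_simple hA hαA hα]
              rw [Submodule.span_le, Set.singleton_subset_iff]
              refine ⟨⟨d', Submodule.mem_span_singleton_self d'⟩, ?_⟩
              have h1 : (⟨d', Submodule.mem_span_singleton_self d'⟩ :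
                  ↥(Submodule.span S {d'})) = ⟨(1 : S) • d', by
                    rw [one_smul]; exact Submodule.mem_span_singleton_self d'⟩ := by
                exact Subtype.ext (one_smul S d').symm
              rw [h1, hfapply 1 _, one_smul]
          have hvan : ∀ y : ↥(Submodule.span S {d'}), (y : D) ∈ A → f y = 0 := by
            rintro ⟨y, hy⟩ hyA
            obtain ⟨s, rfl⟩ := Submodule.mem_span_singleton.1 hy
            -- here (s • d') ∈ A, so s•m' lands in M ∩ T(A, span w ⊔ V) = 0
            have h1 : s • (d' ⊗ₜ[F] w + tV) ∈ tensorSub F A (Submodule.span F {w} ⊔ V) := by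
              rw [smul_add, TensorProduct.smul_tmul']
              refine Submodule.add_mem _ ?_ ?_
              · exact tensorSub_mono le_sup_left
                  (tmul_mem_tensorSub hyA (Submodule.mem_span_singleton_self w))
              · exact tensorSub_mono le_sup_right (Submodule.smul_mem _ s htVT)
            have h2 : s • (d' ⊗ₜ[F] w + tV) ∈ M := M.smul_mem s hm'
            have h3 : s • (d' ⊗ₜ[F] w + tV) ∈ tensorSub F A U :=
              hscl ▸ (Submodule.mem_inf.2 ⟨h2, tensorSub_mono le_top h1⟩)
            have h4 : s • (d' ⊗ₜ[F] w + tV) ∈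
                tensorSub F A (U ⊓ (Submodule.span F {w} ⊔ V)) :=
              tensorSub_inf_le A _ _ ⟨h3, h1⟩
            have h5 : U ⊓ (Submodule.span F {w} ⊔ V) = ⊥ := by
              rw [inf_comm]; exact hdisj1
            rw [h5, tensorSub_bot_right] at h4
            have h6 : s • (d' ⊗ₜ[F] w + tV) = 0 := by simpa using h4
            -- extract the w-coordinate to get s • d' = 0
            obtain ⟨ψ, hψ⟩ := exists_dual_one (F := F) w hw0
            have h7 : coordMap (S := S) ψ (s • (d' ⊗ₜ[F] w + tV)) = 0 := by
              rw [h6, map_zero]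
            have h8 : mapRight (S := S) pw (s • (d' ⊗ₜ[F] w + tV)) = (s • d') ⊗ₜ[F] w := by
              have e1 : mapRight (S := S) pw (d' ⊗ₜ[F] w) = d' ⊗ₜ[F] w := by
                rw [mapRight_tmul, hpw1 w (Submodule.mem_span_singleton_self w)]
              have h9 : mapRight (S := S) pw tV = 0 := by
                have h10 : mapRight (S := S) pw tV ∈ tensorSub F A (⊥ : Submodule F W) := by
                  refine mapRight_mem_tensorSub pw ?_ htVT
                  intro v hv
                  rw [hpw2 v (Submodule.mem_sup_right hv)]
                  exact Submodule.zero_mem _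
                rw [tensorSub_bot_right] at h10
                simpa using h10
              rw [map_smul, map_add, e1, h9, add_zero, TensorProduct.smul_tmul']
            have h11 : (s • d') ⊗ₜ[F] w = 0 := by
              rw [← h8, h6, map_zero]
            have h12 : s • d' = 0 := by
              have := congrArg (coordMap (S := S) ψ) h11
              rw [coordMap_tmul, hψ, one_smul, map_zero] at this
              exact this
            rw [hfapply s hy, ← map_smul, hzero s h12, map_zero]
          exact hQ (Submodule.span S {d'}) f hrange hvan
        have hpure : d' ⊗ₜ[F] w ∈ M := by
          rw [← add_zero (d' ⊗ₜ[F] w), ← htV0]; exact hm'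
        refine ⟨d' ⊗ₜ[F] w, Submodule.subset_span ⟨⟨d', w, rfl⟩, hpure⟩, ?_⟩
        rw [hπtmul]
        have : A.mkQ d' = A.mkQ d := by
          rw [hd', map_add, show A.mkQ a₀ = 0 from (Submodule.Quotient.mk_eq_zero A).2 ha₀A,
            add_zero]
        rw [this]
    -- conclude
    have hIH := ih (D ⧸ A) hGood' (M.map π)
    have hspanle : Submodule.span S {x : (D ⧸ A) ⊗[F] W |
        (∃ d w, d ⊗ₜ[F] w = x) ∧ x ∈ M.map π} ≤ N.map π := by
      refine Submodule.span_le.2 ?_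
      rintro x ⟨hx1, hx2⟩
      exact hPL x hx1 hx2
    intro x hxM
    have h1 : π x ∈ N.map π := hspanle (hIH (Submodule.mem_map_of_mem hxM))
    obtain ⟨y, hyN, hπy⟩ := h1
    have h2 : x - y ∈ tensorSub F A ⊤ := by
      rw [← hkerπ]
      simp only [LinearMap.mem_ker, map_sub, hπy, sub_self]
    have h3 : x - y ∈ M := Submodule.sub_mem _ hxM (hNM hyN)
    have h4 : x - y ∈ N := hTUN (hscl ▸ Submodule.mem_inf.2 ⟨h3, h2⟩)
    have : x = y + (x - y) := by abel
    rw [this]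
    exact Submodule.add_mem _ hyN h4

section Transport
variable {S : Type*} [Ring S]
variable {D : Type*} [AddCommGroup D] [Module S D]
variable {D' : Type*} [AddCommGroup D'] [Module S D']

/-- Subquotient isomorphism along a surjection whose kernel is below `P`. -/
noncomputable def subquotEquiv (g : D →ₗ[S] D') (hg : Function.Surjective g)
    (P Q : Submodule S D) (hPQ : P ≤ Q) (hker : LinearMap.ker g ≤ P) :
    (↥Q ⧸ P.comap Q.subtype) ≃ₗ[S]
      (↥(Q.map g) ⧸ (P.map g).comap (Q.map g).subtype) := by
  set u : ↥Q →ₗ[S] ↥(Q.map g) :=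
    g.restrict (fun x hx => Submodule.mem_map_of_mem hx) with hu
  set v : ↥Q →ₗ[S] (↥(Q.map g) ⧸ (P.map g).comap (Q.map g).subtype) :=
    ((P.map g).comap (Q.map g).subtype).mkQ ∘ₗ u with hv
  have huval : ∀ y : ↥Q, (u y : D') = g y := fun y => rfl
  have hvsurj : Function.Surjective v := by
    intro z
    obtain ⟨y, rfl⟩ := Submodule.mkQ_surjective _ z
    obtain ⟨q, hq, hgq⟩ := y.2
    refine ⟨⟨q, hq⟩, ?_⟩
    have : u ⟨q, hq⟩ = y := Subtype.ext (by rw [huval]; exact hgq)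
    simp only [hv, LinearMap.coe_comp, Function.comp_apply, this]
  have hkerv : LinearMap.ker v = P.comap Q.subtype := by
    ext ⟨q, hq⟩
    simp only [LinearMap.mem_ker, hv, LinearMap.coe_comp, Function.comp_apply,
      Submodule.mem_comap, Submodule.coe_subtype, Submodule.mkQ_apply]
    rw [Submodule.Quotient.mk_eq_zero]
    simp only [Submodule.mem_comap, Submodule.coe_subtype, huval]
    constructor
    · rintro ⟨p, hp, hgp⟩
      have : q - p ∈ LinearMap.ker g := by
        simp only [LinearMap.mem_ker, map_sub, hgp, sub_self]
      have h2 : q - p ∈ P := hker this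
      have : q = p + (q - p) := by abel
      rw [this]
      exact P.add_mem hp h2
    · intro hqP
      exact ⟨q, hqP, rfl⟩
  exact (Submodule.quotEquivOfEq _ _ hkerv.symm) ≪≫ₗ
    (v.quotKerEquivOfSurjective hvsurj)

end Transport

section EndTransport
variable {F : Type*} [Field F] {S : Type*} [Ring S] [Algebra F S]
variable {X : Type*} [AddCommGroup X] [Module S X]
variable {Y : Type*} [AddCommGroup Y] [Module S Y]

lemma endScalar_congr (e : X ≃ₗ[S] Y)
    (h : ∀ φ : Y →ₗ[S] Y, ∃ c : F, ∀ y, φ y = algebraMap F S c • y) :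
    ∀ φ : X →ₗ[S] X, ∃ c : F, ∀ x, φ x = algebraMap F S c • x := by
  intro φ
  obtain ⟨c, hc⟩ := h (e.toLinearMap ∘ₗ φ ∘ₗ e.symm.toLinearMap)
  refine ⟨c, fun x => ?_⟩
  have := hc (e x)
  simp only [LinearMap.coe_comp, Function.comp_apply, LinearEquiv.coe_coe,
    LinearEquiv.symm_apply_apply] at this
  have h2 := congrArg e.symm this
  rw [LinearEquiv.symm_apply_apply, map_smul, LinearEquiv.symm_apply_apply] at h2
  exact h2

end EndTransport

section Covby
variable {S : Type*} [Ring S] {D : Type*} [AddCommGroup D] [Module S D]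

lemma covby_map_mkQ (A P Q : Submodule S D) (hAP : A ≤ P) (h : P ⋖ Q) :
    P.map A.mkQ ⋖ Q.map A.mkQ := by
  have hAQ : A ≤ Q := hAP.trans h.1.le
  have hcomapP : Submodule.comap A.mkQ (P.map A.mkQ) = P := by
    rw [Submodule.comap_map_mkQ, sup_eq_right.2 hAP]
  have hcomapQ : Submodule.comap A.mkQ (Q.map A.mkQ) = Q := by
    rw [Submodule.comap_map_mkQ, sup_eq_right.2 hAQ]
  constructor
  · -- strict inequality
    constructor
    · exact Submodule.map_mono h.1.le
    · intro hle
      have := Submodule.comap_mono (f := A.mkQ) hle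
      rw [hcomapP, hcomapQ] at this
      exact absurd (le_antisymm h.1.le this) h.1.ne
  · -- nothing strictly between
    intro Z hPZ hZQ
    have h1 : P < Submodule.comap A.mkQ Z := by
      rw [← hcomapP]
      constructor
      · exact Submodule.comap_mono (f := A.mkQ) hPZ.le
      · intro hle
        have h2 := Submodule.map_mono (f := A.mkQ) hle
        rw [hcomapP] at h2
        rw [Submodule.map_comap_eq_self (f := A.mkQ) (by rw [Submodule.range_mkQ]; exact le_top)] at h2
        exact absurd (le_antisymm h2 hPZ.le) hPZ.ne'
    have h2 : Submodule.comap A.mkQ Z < Q := by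
      rw [← hcomapQ]
      constructor
      · exact Submodule.comap_mono (f := A.mkQ) hZQ.le
      · intro hle
        have h3 := Submodule.map_mono (f := A.mkQ) hle
        rw [hcomapQ] at h3
        rw [Submodule.map_comap_eq_self (f := A.mkQ) (by rw [Submodule.range_mkQ]; exact le_top)] at h3
        exact absurd (le_antisymm hZQ.le h3) hZQ.ne
    exact h.2 h1 h2

lemma map_mkQ_self_eq_bot (A : Submodule S D) : A.map A.mkQ = ⊥ := by
  rw [eq_bot_iff]
  rintro x ⟨a, ha, rfl⟩
  simp only [Submodule.mem_bot, Submodule.mkQ_apply]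
  exact (Submodule.Quotient.mk_eq_zero A).2 ha

end Covby

theorem good_of_chain {F : Type*} [Field F] {S : Type*} [Ring S] [Algebra F S] :
    ∀ (N : ℕ) (D : Type uD) [AddCommGroup D] [Module F D] [Module S D] [IsScalarTower F S D],
    ∀ c : ℕ → Submodule S D,
      c 0 = ⊥ → c N = ⊤ → (∀ l, l < N → c l ⋖ c (l + 1)) →
      (∀ l m : ℕ, l < N → m < N → l ≠ m →
        ¬ Nonempty ((↥(c (l+1)) ⧸ (c l).comap (c (l+1)).subtype) ≃ₗ[S]
          (↥(c (m+1)) ⧸ (c m).comap (c (m+1)).subtype))) →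
      (∀ P Q : Submodule S D, P ≤ Q → IsSimpleModule S (↥Q ⧸ P.comap Q.subtype) →
        ∀ φ : (↥Q ⧸ P.comap Q.subtype) →ₗ[S] (↥Q ⧸ P.comap Q.subtype),
          ∃ cc : F, ∀ x, φ x = algebraMap F S cc • x) →
      Good F S N D := by
  intro N
  induction N with
  | zero =>
    intro D _ _ _ _ c h0 hN _ _ _
    show Subsingleton D
    constructor
    intro a b
    have hall : ∀ d : D, d = 0 := by
      intro d
      have : d ∈ (⊥ : Submodule S D) := by rw [← h0, hN]; trivial
      simpa using this
    rw [hall a, hall b]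
  | succ N ih =>
    intro D _ _ _ _ c h0 hN hstep hdist hEndAll
    have hmono : ∀ m l : ℕ, l ≤ m → m ≤ N + 1 → c l ≤ c m := by
      intro m
      induction m with
      | zero =>
        intro l hl _
        have : l = 0 := by omega
        subst this; exact le_rfl
      | succ m ihm =>
        intro l hl hm
        rcases Nat.eq_or_lt_of_le hl with h | h
        · subst h; exact le_rfl
        · exact le_trans (ihm l (by omega) (by omega)) (hstep m (by omega)).le
    have hbotA : (⊥ : Submodule S D) ⋖ c 1 := by
      rw [← h0]; exact hstep 0 (by omega)
    have hquotbot : ((⊥ : Submodule S D).comap (c 1).subtype) = ⊥ := by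
      rw [Submodule.comap_bot, Submodule.ker_subtype]
    have hsimpleQuot : IsSimpleModule S (↥(c 1) ⧸ (⊥ : Submodule S D).comap (c 1).subtype) :=
      (covBy_iff_quot_is_simple bot_le).1 hbotA
    let ebot : (↥(c 1) ⧸ (⊥ : Submodule S D).comap (c 1).subtype) ≃ₗ[S] ↥(c 1) :=
      Submodule.quotEquivOfEqBot _ hquotbot
    have hA : IsSimpleModule S ↥(c 1) := by
      haveI := hsimpleQuot
      exact IsSimpleModule.congr ebot.symm
    have hAne : (c 1) ≠ ⊥ := hbotA.lt.ne'
    have hAEnd : ∀ φ : ↥(c 1) →ₗ[S] ↥(c 1), ∃ cc : F, ∀ x, φ x = algebraMap F S cc • x :=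
      endScalar_congr ebot.symm (hEndAll ⊥ (c 1) bot_le hsimpleQuot)
    -- the "no ghost maps onto c 1" property
    have hQk : ∀ k : ℕ, k ≤ N + 1 → ∀ Y : Submodule S D, Y ≤ c k →
        ∀ f : ↥Y →ₗ[S] D, LinearMap.range f = c 1 →
        (∀ y : ↥Y, (y : D) ∈ c 1 → f y = 0) → False := by
      intro k
      induction k with
      | zero =>
        intro _ Y hY f hrange hvan
        have hbot : LinearMap.range f = ⊥ := by
          rw [eq_bot_iff]
          rintro x ⟨y, rfl⟩
          have hy0 : (y : D) = 0 := by
            have := hY y.2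
            rw [h0] at this; simpa using this
          have hy : y = 0 := Subtype.ext hy0
          rw [hy, map_zero]; simp
        exact hAne (by rw [← hrange, hbot])
      | succ k ihk =>
        intro hk Y hY f hrange hvan
        by_cases hYA : Y ≤ c 1
        · have hbot : LinearMap.range f = ⊥ := by
            rw [eq_bot_iff]
            rintro x ⟨y, rfl⟩
            rw [hvan y (hYA y.2)]; simp
          exact hAne (by rw [← hrange, hbot])
        · set f' : ↥(Y ⊓ c k) →ₗ[S] D := f ∘ₗ Submodule.inclusion inf_le_left with hf'
          have hrange' : LinearMap.range f' ≤ c 1 := by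
            rintro x ⟨y, rfl⟩
            rw [← hrange]
            exact ⟨Submodule.inclusion inf_le_left y, rfl⟩
          have hAatom : IsAtom (c 1) := isSimpleModule_iff_isAtom.1 hA
          rcases lt_or_eq_of_le hrange' with hlt | heq
          · -- range f' = ⊥
            have hrange'bot : LinearMap.range f' = ⊥ := hAatom.2 _ hlt
            have hfvanB : ∀ y : ↥Y, (y : D) ∈ c k → f y = 0 := by
              intro y hyB
              have h1 : f' ⟨(y : D), ⟨y.2, hyB⟩⟩ = f y := by
                show f (Submodule.inclusion inf_le_left ⟨(y : D), _⟩) = f y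
                congr 1
              have h2 : f' ⟨(y : D), ⟨y.2, hyB⟩⟩ ∈ LinearMap.range f' := ⟨_, rfl⟩
              rw [hrange'bot] at h2
              rw [← h1]; simpa using h2
            have hBC : c k ⋖ c (k + 1) := hstep k (by omega)
            have hτsimple : IsSimpleModule S
                (↥(c (k+1)) ⧸ (c k).comap (c (k+1)).subtype) :=
              (covBy_iff_quot_is_simple hBC.le).1 hBC
            set u : ↥Y →ₗ[S] (↥(c (k+1)) ⧸ (c k).comap (c (k+1)).subtype) :=
              ((c k).comap (c (k+1)).subtype).mkQ ∘ₗ Submodule.inclusion hY with hu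
            have humem : ∀ y : ↥Y, (u y = 0 ↔ (y : D) ∈ c k) := by
              intro y
              simp only [hu, LinearMap.coe_comp, Function.comp_apply, Submodule.mkQ_apply]
              rw [Submodule.Quotient.mk_eq_zero]
              exact Iff.rfl
            rcases hτsimple.1.2 (LinearMap.range u) with hubot | hutop
            · -- Y ≤ c k
              have hYB : Y ≤ c k := by
                intro y hy
                have h1 : u ⟨y, hy⟩ ∈ LinearMap.range u := ⟨_, rfl⟩
                rw [hubot] at h1
                have h2 : u ⟨y, hy⟩ = 0 := by simpa using h1
                exact (humem ⟨y, hy⟩).1 h2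
              exact ihk (by omega) Y hYB f hrange hvan
            · -- u surjective: build iso τ ≃ c 1 and contradict distinctness
              have husurj : Function.Surjective u := LinearMap.range_eq_top.1 hutop
              have hkerle : LinearMap.ker u ≤ LinearMap.ker f := by
                intro y hy
                simp only [LinearMap.mem_ker] at hy ⊢
                exact hfvanB y ((humem y).1 hy)
              set h' : (↥(c (k+1)) ⧸ (c k).comap (c (k+1)).subtype) →ₗ[S] D :=
                ((LinearMap.ker u).liftQ f hkerle) ∘ₗ
                  (u.quotKerEquivOfSurjective husurj).symm.toLinearMap with hh'def
              have hh' : ∀ y : ↥Y, h' (u y) = f y := by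
                intro y
                have he : (u.quotKerEquivOfSurjective husurj) (Submodule.Quotient.mk y)
                    = u y := by
                  simp [LinearMap.quotKerEquivOfSurjective]
                have h2 := congrArg (u.quotKerEquivOfSurjective husurj).symm he
                rw [LinearEquiv.symm_apply_apply] at h2
                show ((LinearMap.ker u).liftQ f hkerle)
                  ((u.quotKerEquivOfSurjective husurj).symm (u y)) = f y
                rw [← h2, Submodule.liftQ_apply]
              have hrangeh : LinearMap.range h' = c 1 := by
                apply le_antisymm
                · rintro x ⟨z, rfl⟩
                  obtain ⟨y, rfl⟩ := husurj z
                  rw [hh' y, ← hrange]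
                  exact ⟨y, rfl⟩
                · rw [← hrange]
                  rintro x ⟨y, rfl⟩
                  exact ⟨u y, hh' y⟩
              have hkerh : LinearMap.ker h' = ⊥ := by
                rcases hτsimple.1.2 (LinearMap.ker h') with hb | ht
                · exact hb
                · exfalso
                  have hzero : LinearMap.range h' = ⊥ := by
                    rw [eq_bot_iff]
                    rintro x ⟨z, rfl⟩
                    have : z ∈ LinearMap.ker h' := by rw [ht]; trivial
                    simpa using this
                  exact hAne (by rw [← hrangeh, hzero])
              have hinj : Function.Injective h' := LinearMap.ker_eq_bot.1 hkerh
              have hk0 : k ≠ 0 := by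
                intro hk0
                subst hk0
                exact hYA hY
              refine hdist 0 k (by omega) (by omega) (by omega) ?_
              refine ⟨?_⟩
              have e4 : (↥(c (0+1)) ⧸ (c 0).comap (c (0+1)).subtype) ≃ₗ[S] ↥(c 1) := by
                have hc0 : ((c 0).comap (c (0+1)).subtype) = ⊥ := by
                  rw [h0, Submodule.comap_bot, Submodule.ker_subtype]
                exact Submodule.quotEquivOfEqBot _ hc0
              have e3 : (↥(c (k+1)) ⧸ (c k).comap (c (k+1)).subtype) ≃ₗ[S] ↥(c 1) :=
                (LinearEquiv.ofInjective h' hinj).trans (LinearEquiv.ofEq _ _ hrangeh)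
              exact e4 ≪≫ₗ e3.symm
          · -- range f' = c 1 : recurse
            refine ihk (by omega) (Y ⊓ c k) inf_le_right f' heq ?_
            intro y hy
            show f (Submodule.inclusion inf_le_left y) = 0
            exact hvan _ hy
    -- assemble Good (N+1)
    refine ⟨c 1, hA, hAEnd, ?_, ?_⟩
    · intro Y f hrange hvan
      exact hQk (N + 1) le_rfl Y (by rw [hN]; exact le_top) f hrange hvan
    · -- Good F S N (D ⧸ c 1)
      set A := c 1 with hAdef
      have hkermkQ : ∀ l : ℕ, 1 ≤ l → l ≤ N + 1 → LinearMap.ker A.mkQ ≤ c l := by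
        intro l h1 h2
        rw [Submodule.ker_mkQ]
        exact hmono l 1 h1 h2
      refine ih (D ⧸ A) (fun l => (c (l + 1)).map A.mkQ) ?_ ?_ ?_ ?_ ?_
      · exact map_mkQ_self_eq_bot A
      · show Submodule.map A.mkQ (c (N+1)) = ⊤
        rw [hN, Submodule.map_top, Submodule.range_mkQ]
      · intro l hl
        exact covby_map_mkQ A (c (l+1)) (c (l+1+1))
          (hmono (l+1) 1 (by omega) (by omega)) (hstep (l+1) (by omega))
      · intro l m hl hm hlm ⟨e⟩
        refine hdist (l+1) (m+1) (by omega) (by omega) (by omega) ?_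
        refine ⟨?_⟩
        have el := subquotEquiv A.mkQ A.mkQ_surjective (c (l+1)) (c (l+1+1))
          (hmono (l+1+1) (l+1) (by omega) (by omega)) (hkermkQ (l+1) (by omega) (by omega))
        have em := subquotEquiv A.mkQ A.mkQ_surjective (c (m+1)) (c (m+1+1))
          (hmono (m+1+1) (m+1) (by omega) (by omega)) (hkermkQ (m+1) (by omega) (by omega))
        exact el ≪≫ₗ e ≪≫ₗ em.symm
      · intro Pq Qq hle hsimp φ
        have hP : Submodule.map A.mkQ (Submodule.comap A.mkQ Pq) = Pq :=
          Submodule.map_comap_eq_self (f := A.mkQ) (by rw [Submodule.range_mkQ]; exact le_top)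
        have hQq : Submodule.map A.mkQ (Submodule.comap A.mkQ Qq) = Qq :=
          Submodule.map_comap_eq_self (f := A.mkQ) (by rw [Submodule.range_mkQ]; exact le_top)
        revert hsimp φ
        rw [← hP, ← hQq]
        intro hsimp φ
        have hPQ : Submodule.comap A.mkQ Pq ≤ Submodule.comap A.mkQ Qq :=
          Submodule.comap_mono hle
        have hker : LinearMap.ker A.mkQ ≤ Submodule.comap A.mkQ Pq := by
          rw [Submodule.ker_mkQ]
          intro x hx
          simp only [Submodule.mem_comap, Submodule.mkQ_apply]
          rw [(Submodule.Quotient.mk_eq_zero A).2 hx]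
          exact Submodule.zero_mem _
        have e := subquotEquiv A.mkQ A.mkQ_surjective
          (Submodule.comap A.mkQ Pq) (Submodule.comap A.mkQ Qq) hPQ hker
        have hsimp' : IsSimpleModule S (↥(Submodule.comap A.mkQ Qq) ⧸
            (Submodule.comap A.mkQ Pq).comap (Submodule.comap A.mkQ Qq).subtype) := by
          haveI := hsimp
          exact IsSimpleModule.congr e
        exact endScalar_congr e.symm (hEndAll _ _ hPQ hsimp') φ

/-- **Lemma 3.1.5(i)** -/
theorem statement0 {F S D W : Type*} [Field F] [Ring S] [Algebra F S]
    [AddCommGroup D] [Module F D] [Module S D] [IsScalarTower F S D]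
    [AddCommGroup W] [Module F W] [FiniteDimensional F W]
    (hfl : IsFiniteLength S D)
    (hmf : MultiplicityFree S D)
    (hEnd : ∀ A B : Submodule S D, A ≤ B →
      IsSimpleModule S (B ⧸ A.comap B.subtype) →
      ∀ φ : (B ⧸ A.comap B.subtype) →ₗ[S] (B ⧸ A.comap B.subtype),
        ∃ c : F, ∀ x, φ x = algebraMap F S c • x)
    (M₁ M₂ : Submodule S (D ⊗[F] W))
    (h : ∀ L : Submodule F W, Module.finrank F L = 1 →
      M₁ ⊓ tensorSub F (⊤ : Submodule S D) L = M₂ ⊓ tensorSub F (⊤ : Submodule S D) L) :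
    M₁ = M₂ := by
  obtain ⟨s, hhead, hlast, hdist⟩ := hmf
  set c : ℕ → Submodule S D :=
    fun l => if hle : l ≤ s.length then s ⟨l, Nat.lt_succ_of_le hle⟩ else ⊤ with hcdef
  have hcl : ∀ l (hle : l ≤ s.length), c l = s ⟨l, Nat.lt_succ_of_le hle⟩ :=
    fun l hle => dif_pos hle
  have hGood : Good F S s.length D := by
    refine good_of_chain s.length D c ?_ ?_ ?_ ?_ hEnd
    · rw [hcl 0 (Nat.zero_le _)]
      rw [show (⟨0, Nat.lt_succ_of_le (Nat.zero_le _)⟩ : Fin (s.length + 1)) = 0 from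
        Fin.ext (by simp)]
      exact hhead
    · rw [hcl s.length le_rfl]
      rw [show (⟨s.length, Nat.lt_succ_of_le le_rfl⟩ : Fin (s.length + 1)) =
        Fin.last s.length from Fin.ext rfl]
      exact hlast
    · intro l hl
      rw [hcl l (le_of_lt hl), hcl (l + 1) hl]
      exact s.step ⟨l, hl⟩
    · intro l m hl hm hlm hiso
      rw [hcl l (le_of_lt hl), hcl (l + 1) hl, hcl m (le_of_lt hm), hcl (m + 1) hm] at hiso
      exact hdist ⟨l, hl⟩ ⟨m, hm⟩ (by simp [Fin.ext_iff]; omega) hiso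
  have hpure : ∀ (Mx My : Submodule S (D ⊗[F] W)),
      (∀ L : Submodule F W, Module.finrank F L = 1 →
        Mx ⊓ tensorSub F (⊤ : Submodule S D) L = My ⊓ tensorSub F (⊤ : Submodule S D) L) →
      Mx ≤ My := by
    intro Mx My hxy
    have hsub : {x : D ⊗[F] W | (∃ d w, d ⊗ₜ[F] w = x) ∧ x ∈ Mx} ⊆ ↑My := by
      rintro x ⟨⟨d, w, rfl⟩, hxM⟩
      by_cases hw : w = 0
      · subst hw
        rw [TensorProduct.tmul_zero]
        exact Submodule.zero_mem _
      have hL : Module.finrank F ↥(Submodule.span F {w}) = 1 := finrank_span_singleton hw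
      have hmem : d ⊗ₜ[F] w ∈ Mx ⊓ tensorSub F (⊤ : Submodule S D) (Submodule.span F {w}) :=
        ⟨hxM, tmul_mem_tensorSub trivial (Submodule.mem_span_singleton_self w)⟩
      rw [hxy _ hL] at hmem
      exact hmem.1
    exact le_trans (master s.length D hGood Mx) (Submodule.span_le.2 hsub)
  exact le_antisymm (hpure M₁ M₂ h) (hpure M₂ M₁ (fun L hL => (h L hL).symm))
end

section
/- Fix an integer f ≥ 1 and an integer p. Then the intersection 𝒫 ∩ 𝒟 consists of exactly one tuple, namely the tuple λ with λ_i = x_i (i.e. (ε_i, c_i) = (1, 0)) for all i ∈ ℤ/f. -/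
/-- The set `𝒟` of `f`-tuples: a tuple is a function `λ : ℤ/f → {±1} × ℤ`, encoded as
`ZMod f → ℤ × ℤ`, where the pairs `(1,0), (1,1), (-1,p-2), (-1,p-3)` encode the affine
functions `x, x+1, p-2-x, p-3-x` respectively. -/
def Dset (f : ℕ) (p : ℤ) : Set (ZMod f → ℤ × ℤ) :=
  {lam | ∀ i : ZMod f,
    (lam i = (1, 0) ∨ lam i = (1, 1) ∨ lam i = (-1, p - 2) ∨ lam i = (-1, p - 3)) ∧
    ((lam i = (1, 0) ∨ lam i = (1, 1)) →
      (lam (i + 1) = (1, 0) ∨ lam (i + 1) = (-1, p - 2))) ∧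
    ((lam i = (-1, p - 2) ∨ lam i = (-1, p - 3)) →
      (lam (i + 1) = (-1, p - 3) ∨ lam (i + 1) = (1, 1)))}

/-- The set `𝒫` of `f`-tuples: the pairs `(1,0), (1,-1), (-1,p-2), (-1,p-1)` encode the affine
functions `x, x-1, p-2-x, p-1-x` respectively. -/
def Pset (f : ℕ) (p : ℤ) : Set (ZMod f → ℤ × ℤ) :=
  {lam | ∀ i : ZMod f,
    (lam i = (1, 0) ∨ lam i = (1, -1) ∨ lam i = (-1, p - 2) ∨ lam i = (-1, p - 1)) ∧
    ((lam i = (1, 0) ∨ lam i = (1, -1)) →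
      (lam (i + 1) = (1, 0) ∨ lam (i + 1) = (-1, p - 2))) ∧
    ((lam i = (-1, p - 2) ∨ lam i = (-1, p - 1)) →
      (lam (i + 1) = (-1, p - 1) ∨ lam (i + 1) = (1, -1)))}

/-- **Claim (57) in the proof of Theorem 3.2.9**: the intersection `𝒫 ∩ 𝒟` consists exactly of
the tuple which is constantly `x` (i.e. `(1,0)`). -/
theorem statement3 (f : ℕ) (hf : 1 ≤ f) (p : ℤ) :
    Pset f p ∩ Dset f p = {fun _ : ZMod f => ((1 : ℤ), (0 : ℤ))} := by
  ext lam
  constructor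
  · rintro ⟨hP, hD⟩
    have key : ∀ i : ZMod f, lam i = (1, 0) ∨ lam i = (-1, p - 2) := by
      intro i
      have h1 := (hP i).1
      have h2 := (hD i).1
      rcases h1 with h | h | h | h <;> rcases h2 with h' | h' | h' | h' <;>
        simp_all [Prod.ext_iff] <;> omega
    have key2 : ∀ i : ZMod f, lam i = (1, 0) := by
      intro i
      rcases key i with h | h
      · exact h
      · exfalso
        have h3 := (hD i).2.2 (Or.inl h)
        rcases key (i + 1) with h4 | h4 <;> rcases h3 with h5 | h5 <;>
          simp_all [Prod.ext_iff] <;> omega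
    simp only [Set.mem_singleton_iff]
    funext i
    exact key2 i
  · intro h
    simp only [Set.mem_singleton_iff] at h
    subst h
    constructor <;> intro i <;>
      refine ⟨by tauto, fun _ => by tauto, fun hc => ?_⟩ <;>
        rcases hc with hc | hc <;> simp [Prod.ext_iff] at hc <;> omega
end

section
/- Let F be a field, V an F-vector space, A a ring, and M an A-module. Suppose that to every one-dimensional F-subspace L of V there is assigned a simple A-submodule N(L) of M, in such a way that N(L') ⊆ N(L₁) + N(L₂) whenever L', L₁, L₂ are one-dimensional subspaces of V with L' ⊆ L₁ + L₂. Then the modules N(L) are pairwise isomorphic: N(L₁) ≅ N(L₂) as A-modules for all one-dimensional subspaces L₁, L₂ of V. -/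
open Module Submodule

/-- A simple submodule contained in a sum of two simple submodules is isomorphic to one of them. -/
lemma aux_simple_sub_sum {A M : Type*} [Ring A] [AddCommGroup M] [Module A M]
    (P Q₁ Q₂ : Submodule A M) (hP : IsSimpleModule A P) (hQ₁ : IsSimpleModule A Q₁)
    (hQ₂ : IsSimpleModule A Q₂) (hle : P ≤ Q₁ ⊔ Q₂) :
    Nonempty (P ≃ₗ[A] Q₁) ∨ Nonempty (P ≃ₗ[A] Q₂) := by
  rw [isSimpleModule_iff_isAtom] at hP hQ₁ hQ₂
  by_cases hPQ2 : P ≤ Q₂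
  · right
    exact ⟨LinearEquiv.ofEq _ _ ((hQ₂.le_iff_eq hP.1).mp hPQ2)⟩
  by_cases hQ12 : Q₁ ≤ Q₂
  · exact absurd (hle.trans (sup_le hQ12 le_rfl)) hPQ2
  left
  set f : M →ₗ[A] M ⧸ Q₂ := Q₂.mkQ with hf
  have hkf : LinearMap.ker f = Q₂ := Submodule.ker_mkQ Q₂
  -- P and Q₁ intersect Q₂ trivially
  have hPd : P ⊓ Q₂ = ⊥ := by
    rcases hP.le_iff.mp inf_le_left with h | h
    · exact h
    · exact absurd (h ▸ inf_le_right) hPQ2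
  have hQd : Q₁ ⊓ Q₂ = ⊥ := by
    rcases hQ₁.le_iff.mp inf_le_left with h | h
    · exact h
    · exact absurd (h ▸ inf_le_right) hQ12
  -- injectivity of f on P and on Q₁
  have injP : Function.Injective (f ∘ₗ P.subtype) := by
    rw [← LinearMap.ker_eq_bot, LinearMap.ker_comp, hkf]
    rw [Submodule.eq_bot_iff]
    rintro ⟨x, hx⟩ h
    simp only [Submodule.mem_comap, Submodule.coe_subtype] at h
    have : x ∈ P ⊓ Q₂ := ⟨hx, h⟩
    rw [hPd] at this
    exact Subtype.ext this
  have injQ : Function.Injective (f ∘ₗ Q₁.subtype) := by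
    rw [← LinearMap.ker_eq_bot, LinearMap.ker_comp, hkf]
    rw [Submodule.eq_bot_iff]
    rintro ⟨x, hx⟩ h
    simp only [Submodule.mem_comap, Submodule.coe_subtype] at h
    have : x ∈ Q₁ ⊓ Q₂ := ⟨hx, h⟩
    rw [hQd] at this
    exact Subtype.ext this
  have hrangeP : LinearMap.range (f ∘ₗ P.subtype) = P.map f := by
    rw [LinearMap.range_comp, Submodule.range_subtype]
  have hrangeQ : LinearMap.range (f ∘ₗ Q₁.subtype) = Q₁.map f := by
    rw [LinearMap.range_comp, Submodule.range_subtype]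
  have eP : (P : Type _) ≃ₗ[A] (P.map f : Submodule A (M ⧸ Q₂)) :=
    (LinearEquiv.ofInjective _ injP).trans (LinearEquiv.ofEq _ _ hrangeP)
  have eQ : (Q₁ : Type _) ≃ₗ[A] (Q₁.map f : Submodule A (M ⧸ Q₂)) :=
    (LinearEquiv.ofInjective _ injQ).trans (LinearEquiv.ofEq _ _ hrangeQ)
  -- map f P ≤ map f Q₁
  have hmaple : P.map f ≤ Q₁.map f := by
    have : P.map f ≤ (Q₁ ⊔ Q₂).map f := Submodule.map_mono hle
    rwa [Submodule.map_sup, show Q₂.map f = ⊥ from ?_, sup_bot_eq] at this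
    rw [Submodule.eq_bot_iff]
    rintro x ⟨y, hy, rfl⟩
    simp only [hf, Submodule.mkQ_apply]
    exact (Submodule.Quotient.mk_eq_zero Q₂).mpr hy
  -- map f Q₁ is an atom, map f P is nonzero, hence equal
  have hatom : IsAtom (Q₁.map f) := by
    rw [← isSimpleModule_iff_isAtom]
    exact (isSimpleModule_iff_isAtom.mpr hQ₁).congr eQ.symm
  have hPne : P.map f ≠ ⊥ := by
    intro h
    apply hPQ2
    intro x hx
    have hfx : f x ∈ P.map f := ⟨x, hx, rfl⟩
    rw [h, Submodule.mem_bot] at hfx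
    have : x ∈ LinearMap.ker f := hfx
    rwa [hkf] at this
  have heq : P.map f = Q₁.map f := (hatom.le_iff.mp hmaple).resolve_left hPne
  exact ⟨eP.trans ((LinearEquiv.ofEq _ _ heq).trans eQ.symm)⟩

/-- A subspace of finrank 1 is spanned by a nonzero vector. -/
lemma aux_line_span {F V : Type*} [Field F] [AddCommGroup V] [Module F V]
    (L : Submodule F V) (h : Module.finrank F L = 1) :
    ∃ v : V, v ≠ 0 ∧ L = Submodule.span F {v} := by
  obtain ⟨v, hv, hspan⟩ := finrank_eq_one_iff'.mp h
  refine ⟨(v : V), by simpa using hv, le_antisymm ?_ ?_⟩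
  · intro x hx
    obtain ⟨c, hc⟩ := hspan ⟨x, hx⟩
    have : c • (v : V) = x := congrArg Subtype.val hc
    exact this ▸ Submodule.smul_mem _ _ (Submodule.mem_span_singleton_self _)
  · rw [Submodule.span_le, Set.singleton_subset_iff]
    exact v.2

/-- **Step 1 of the proof of Theorem 3.2.9, abstract form**: suppose that to every line
(one-dimensional `F`-subspace) `L` of an `F`-vector space `V` there is assigned a simple
`A`-submodule `N L` of an `A`-module `M`, in such a way that `N L' ⊆ N L₁ + N L₂` whenever
`L' ⊆ L₁ + L₂`. Then the `N L` are pairwise isomorphic as `A`-modules. -/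
theorem statement6 {F V A M : Type*} [Field F] [AddCommGroup V] [Module F V]
    [Ring A] [AddCommGroup M] [Module A M]
    (N : Submodule F V → Submodule A M)
    (hsimple : ∀ L : Submodule F V, Module.finrank F L = 1 → IsSimpleModule A (N L))
    (hsum : ∀ L' L₁ L₂ : Submodule F V, Module.finrank F L' = 1 →
      Module.finrank F L₁ = 1 → Module.finrank F L₂ = 1 →
      L' ≤ L₁ ⊔ L₂ → N L' ≤ N L₁ ⊔ N L₂) :
    ∀ L₁ L₂ : Submodule F V, Module.finrank F L₁ = 1 → Module.finrank F L₂ = 1 →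
      Nonempty ((N L₁) ≃ₗ[A] (N L₂)) := by
  intro L₁ L₂ h₁ h₂
  by_cases heq : L₁ = L₂
  · exact ⟨LinearEquiv.ofEq _ _ (congrArg N heq)⟩
  obtain ⟨v₁, hv₁, hL₁⟩ := aux_line_span L₁ h₁
  obtain ⟨v₂, hv₂, hL₂⟩ := aux_line_span L₂ h₂
  have hv12 : v₁ + v₂ ≠ 0 := by
    intro h
    apply heq
    have hvv : v₂ = -v₁ := eq_neg_of_add_eq_zero_right h
    rw [hL₁, hL₂, hvv, show ({-v₁} : Set V) = -{v₁} by simp, Submodule.span_neg]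
  set L₃ : Submodule F V := Submodule.span F {v₁ + v₂} with hL₃
  have h₃ : Module.finrank F L₃ = 1 := finrank_span_singleton hv12
  have m₁ : v₁ ∈ L₁ := hL₁ ▸ Submodule.mem_span_singleton_self v₁
  have m₂ : v₂ ∈ L₂ := hL₂ ▸ Submodule.mem_span_singleton_self v₂
  have m₃ : v₁ + v₂ ∈ L₃ := Submodule.mem_span_singleton_self _
  have le₃ : L₃ ≤ L₁ ⊔ L₂ := by
    rw [hL₃, Submodule.span_le, Set.singleton_subset_iff]
    exact add_mem (Submodule.mem_sup_left m₁) (Submodule.mem_sup_right m₂)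
  have le₁ : L₁ ≤ L₂ ⊔ L₃ := by
    rw [hL₁, Submodule.span_le, Set.singleton_subset_iff]
    have : v₁ = (v₁ + v₂) - v₂ := by abel
    rw [this]
    exact sub_mem (Submodule.mem_sup_right m₃) (Submodule.mem_sup_left m₂)
  have le₂ : L₂ ≤ L₁ ⊔ L₃ := by
    rw [hL₂, Submodule.span_le, Set.singleton_subset_iff]
    have : v₂ = (v₁ + v₂) - v₁ := by abel
    rw [this]
    exact sub_mem (Submodule.mem_sup_right m₃) (Submodule.mem_sup_left m₁)
  rcases aux_simple_sub_sum (N L₁) (N L₂) (N L₃) (hsimple _ h₁) (hsimple _ h₂)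
      (hsimple _ h₃) (hsum _ _ _ h₁ h₂ h₃ le₁) with h | h
  · exact h
  obtain ⟨e₁₃⟩ := h
  rcases aux_simple_sub_sum (N L₂) (N L₁) (N L₃) (hsimple _ h₂) (hsimple _ h₁)
      (hsimple _ h₃) (hsum _ _ _ h₂ h₁ h₃ le₂) with h | h
  · exact h.map fun e => e.symm
  obtain ⟨e₂₃⟩ := h
  exact ⟨e₁₃.trans e₂₃.symm⟩
end

section
/- Let k be a field, Λ a k-algebra, I a two-sided ideal of Λ, and n ≥ 1 an integer. For a Λ-module N write N[Iⁿ] := { x ∈ N : a·x = 0 for all a ∈ Iⁿ }, a Λ-submodule of N. Let M be a Λ-module such that M[Iⁿ] is finite-dimensional over k, and let A ⊆ B ⊆ M be Λ-submodules. Assume that the natural maps M[Iⁿ] → (M/A)[Iⁿ] and M[Iⁿ] → (M/B)[Iⁿ] induced by the quotient maps are surjective. Then the natural map B[Iⁿ] → (B/A)[Iⁿ] is surjective; equivalently, the sequence 0 → A[Iⁿ] → B[Iⁿ] → (B/A)[Iⁿ] → 0 is exact. -/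
/-- For a `k`-subspace `J` of a `k`-algebra `Λ` and a `Λ`-module `M`, the set
`M[J] = { x ∈ M | a • x = 0 for all a ∈ J }`, as a `k`-subspace of `M`. -/
def torsionSubspace (k Λ : Type*) [Field k] [Ring Λ] [Algebra k Λ] (J : Submodule k Λ)
    (M : Type*) [AddCommGroup M] [Module k M] [Module Λ M] [IsScalarTower k Λ M] :
    Submodule k M where
  carrier := {x | ∀ a ∈ J, a • x = 0}
  add_mem' := fun hx hy => by
    intro a ha
    rw [smul_add, hx a ha, hy a ha, add_zero]
  zero_mem' := fun a _ => smul_zero a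
  smul_mem' := fun c x hx => by
    intro a ha
    rw [smul_comm, hx a ha, smul_zero]

/-- **Dévissage in the proof of Proposition 4.2.4(i)**: let `Λ` be a `k`-algebra, `I` a two-sided
ideal of `Λ`, `n ≥ 1`, and `M` a `Λ`-module whose `Iⁿ`-torsion `M[Iⁿ]` is finite-dimensional
over `k`.  If `A ⊆ B ⊆ M` are `Λ`-submodules such that the natural maps `M[Iⁿ] → (M/A)[Iⁿ]`
and `M[Iⁿ] → (M/B)[Iⁿ]` are surjective, then the natural map `B[Iⁿ] → (B/A)[Iⁿ]` is surjective
(where `B/A` is realised as the image of `B` in `M/A`). -/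
theorem statement7 {k Λ : Type*} [Field k] [Ring Λ] [Algebra k Λ]
    (I : Submodule k Λ)
    (hIleft : ∀ a ∈ I, ∀ b : Λ, b * a ∈ I) (hIright : ∀ a ∈ I, ∀ b : Λ, a * b ∈ I)
    (n : ℕ) (hn : 1 ≤ n)
    {M : Type*} [AddCommGroup M] [Module k M] [Module Λ M] [IsScalarTower k Λ M]
    (A B : Submodule Λ M) (hAB : A ≤ B)
    (hfin : FiniteDimensional k (torsionSubspace k Λ (I ^ n) M))
    (hA : ∀ z : M ⧸ A, (∀ a ∈ I ^ n, a • z = 0) →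
      ∃ x : M, (∀ a ∈ I ^ n, a • x = 0) ∧ A.mkQ x = z)
    (hB : ∀ z : M ⧸ B, (∀ a ∈ I ^ n, a • z = 0) →
      ∃ x : M, (∀ a ∈ I ^ n, a • x = 0) ∧ B.mkQ x = z) :
    ∀ z : M ⧸ A, z ∈ B.map A.mkQ → (∀ a ∈ I ^ n, a • z = 0) →
      ∃ x ∈ B, (∀ a ∈ I ^ n, a • x = 0) ∧ A.mkQ x = z := by
  intro z hzB hztor
  obtain ⟨x, hxtor, hxz⟩ := hA z hztor
  obtain ⟨b, hb, hbz⟩ := hzB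
  refine ⟨x, ?_, hxtor, hxz⟩
  have : A.mkQ (x - b) = 0 := by
    rw [map_sub, hxz, hbz, sub_self]
  have hxb : x - b ∈ A := (Submodule.Quotient.mk_eq_zero A).mp this
  have : x = (x - b) + b := by abel
  rw [this]
  exact B.add_mem (hAB hxb) hb
end
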